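/- arXiv:1109.2336 — 7 statements merged into one kernel-verified Lean document; each statement's English description precedes it below -/
import Mathlib

section
/- Let K be a holomorphic function on a neighbourhood of 0 in ℂ with a zero of exact order j ≥ 1 at 0, and let η₁, η₂ be holomorphic injective germs at 0 with η₁(0) = η₂(0) = 0 such that K(η₁(z)) = K(η₂(z)) = K(z) near 0. If η₁'(0) = η₂'(0), then η₁ and η₂ agree on a neighbourhood of 0. -/
open Topology Filter

private lemma analyticAt_finset_prod {ι : Type*} :
    ∀ (s : Finset ι) (f : ι → ℂ → ℂ),
      (∀ i ∈ s, AnalyticAt ℂ (f i) 0) →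
      AnalyticAt ℂ (fun z => ∏ i ∈ s, f i z) 0 := by
  classical
  intro s
  induction s using Finset.induction_on with
  | empty => intro f _; simpa using (analyticAt_const : AnalyticAt ℂ (fun _ : ℂ => (1:ℂ)) 0)
  | @insert a s hna ih =>
    intro f ha
    simp only [Finset.prod_insert hna]
    exact (ha a (Finset.mem_insert_self a s)).mul
      (ih f fun i hi => ha i (Finset.mem_insert_of_mem hi))

private lemma prod_eventually_zero {ι : Type*} :
    ∀ (s : Finset ι) (f : ι → ℂ → ℂ),
      (∀ i ∈ s, AnalyticAt ℂ (f i) 0) →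
      (∀ᶠ z in 𝓝 (0:ℂ), ∏ i ∈ s, f i z = 0) →
      ∃ i ∈ s, ∀ᶠ z in 𝓝 (0:ℂ), f i z = 0 := by
  classical
  intro s
  induction s using Finset.induction_on with
  | empty =>
    intro f _ hz
    simp only [Finset.prod_empty] at hz
    exact absurd hz.self_of_nhds one_ne_zero
  | @insert a s hna ih =>
    intro f ha hz
    rcases (ha a (Finset.mem_insert_self a s)).eventually_eq_zero_or_eventually_ne_zero with h | h
    · exact ⟨a, Finset.mem_insert_self a s, h⟩
    · have hz' : ∀ᶠ z in 𝓝[≠] (0:ℂ), ∏ i ∈ s, f i z = 0 := by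
        filter_upwards [h, hz.filter_mono nhdsWithin_le_nhds] with z h1 h2
        rw [Finset.prod_insert hna] at h2
        exact (mul_eq_zero.mp h2).resolve_left h1
      have hprod := analyticAt_finset_prod s f fun i hi => ha i (Finset.mem_insert_of_mem hi)
      have heve : ∀ᶠ z in 𝓝 (0:ℂ), ∏ i ∈ s, f i z = 0 :=
        hprod.frequently_zero_iff_eventually_zero.mp hz'.frequently
      obtain ⟨i, hi, hfi⟩ := ih f (fun i hi => ha i (Finset.mem_insert_of_mem hi)) heve
      exact ⟨i, Finset.mem_insert_of_mem hi, hfi⟩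

private lemma symmetry_root (ψ : ℂ → ℂ) (hψ : AnalyticAt ℂ ψ 0)
    (hψ0 : deriv ψ 0 ≠ 0) (j : ℕ) (hj : 1 ≤ j)
    (η : ℂ → ℂ) (hη : AnalyticAt ℂ η 0) (hη0 : η 0 = 0)
    (heq : ∀ᶠ z in 𝓝 (0:ℂ), ψ (η z) ^ j = ψ z ^ j) :
    ∀ᶠ z in 𝓝 (0:ℂ), ψ (η z) = deriv η 0 * ψ z := by
  have hj0 : j ≠ 0 := by omega
  have hψη : AnalyticAt ℂ ψ (η 0) := by rw [hη0]; exact hψ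
  have hF : AnalyticAt ℂ (fun z => ψ (η z)) 0 := by
    simpa [Function.comp_def] using hψη.comp hη
  -- the product over all j-th roots of unity vanishes near 0
  have hprod0 : ∀ᶠ z in 𝓝 (0:ℂ),
      ∏ ζ ∈ Polynomial.nthRootsFinset j (1:ℂ), (ψ (η z) - ζ * ψ z) = 0 := by
    filter_upwards [heq] with z hz
    by_cases hψz : ψ z = 0
    · have hFz : ψ (η z) = 0 := by
        have : ψ (η z) ^ j = 0 := by rw [hz, hψz, zero_pow hj0]
        exact pow_eq_zero_iff hj0 |>.mp this
      refine Finset.prod_eq_zero (i := (1:ℂ)) ?_ ?_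
      · exact (Polynomial.mem_nthRootsFinset (by omega) (1:ℂ)).mpr (one_pow j)
      · rw [hFz, hψz, mul_zero, sub_zero]
    · refine Finset.prod_eq_zero (i := ψ (η z) / ψ z) ?_ ?_
      · refine (Polynomial.mem_nthRootsFinset (by omega) (1:ℂ)).mpr ?_
        rw [div_pow, hz, div_self (pow_ne_zero j hψz)]
      · rw [div_mul_cancel₀ _ hψz, sub_self]
  obtain ⟨ζ, hζmem, hzero⟩ := prod_eventually_zero (Polynomial.nthRootsFinset j (1:ℂ))
    (fun ζ z => ψ (η z) - ζ * ψ z)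
    (fun ζ _ => hF.sub (analyticAt_const.mul hψ)) hprod0
  have hFeq : (fun z => ψ (η z)) =ᶠ[𝓝 (0:ℂ)] (fun z => ζ * ψ z) := by
    filter_upwards [hzero] with z hz
    exact sub_eq_zero.mp hz
  -- derivative comparison
  have hψd : DifferentiableAt ℂ ψ 0 := hψ.differentiableAt
  have hψdη : DifferentiableAt ℂ ψ (η 0) := hψη.differentiableAt
  have hd1 : deriv (fun z => ψ (η z)) 0 = deriv ψ (η 0) * deriv η 0 :=
    deriv_comp (x := 0) hψdη hη.differentiableAt
  have hd2 : deriv (fun z => ζ * ψ z) 0 = ζ * deriv ψ 0 := by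
    simp [deriv_const_mul ζ hψd]
  have hζ : ζ * deriv ψ 0 = deriv ψ 0 * deriv η 0 := by
    rw [← hd2, ← hFeq.deriv_eq, hd1, hη0]
  have hζval : ζ = deriv η 0 := by
    have : deriv ψ 0 * ζ = deriv ψ 0 * deriv η 0 := by
      rw [mul_comm (deriv ψ 0) ζ, hζ, mul_comm]
    exact mul_left_cancel₀ hψ0 this
  filter_upwards [hFeq] with z hz
  rw [hz, hζval]

/-- Two conformal germs at `0` fixing `0` which are symmetries of a holomorphic map `K`
with a zero of exact order `j ≥ 1` at `0` (i.e. `K ∘ ηᵢ = K` near `0`) and have the same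
derivative at `0` agree on a neighbourhood of `0`. -/
theorem germ_determined_by_derivative
    (K : ℂ → ℂ) (hK : AnalyticAt ℂ K 0) (hK0 : K 0 = 0)
    (j : ℕ) (hj : 1 ≤ j)
    (g : ℂ → ℂ) (hg : AnalyticAt ℂ g 0) (hg0 : g 0 ≠ 0)
    (hfac : ∀ᶠ z in 𝓝 (0 : ℂ), K z = z ^ j * g z)
    (η₁ η₂ : ℂ → ℂ)
    (hη₁ : AnalyticAt ℂ η₁ 0) (hη₂ : AnalyticAt ℂ η₂ 0)
    (hη₁0 : η₁ 0 = 0) (hη₂0 : η₂ 0 = 0)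
    (hη₁d : deriv η₁ 0 ≠ 0) (hη₂d : deriv η₂ 0 ≠ 0)
    (hKη₁ : ∀ᶠ z in 𝓝 (0 : ℂ), K (η₁ z) = K z)
    (hKη₂ : ∀ᶠ z in 𝓝 (0 : ℂ), K (η₂ z) = K z)
    (hder : deriv η₁ 0 = deriv η₂ 0) :
    η₁ =ᶠ[𝓝 (0 : ℂ)] η₂ := by
  have hj0 : (j:ℂ) ≠ 0 := Nat.cast_ne_zero.mpr (by omega)
  -- the j-th root of g
  set r : ℂ := Complex.exp (Complex.log (g 0) / j) with hr
  have hr0 : r ≠ 0 := Complex.exp_ne_zero _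
  have hrj : r ^ j = g 0 := by
    rw [hr, ← Complex.exp_nat_mul, mul_div_cancel₀ _ hj0, Complex.exp_log hg0]
  set h : ℂ → ℂ := fun z => r * Complex.exp ((j:ℂ)⁻¹ * Complex.log (g z / g 0)) with hh
  have hgdiv : AnalyticAt ℂ (fun z => g z / g 0) 0 := hg.div analyticAt_const hg0
  have hlog : AnalyticAt ℂ (fun z => Complex.log (g z / g 0)) 0 := by
    apply (analyticAt_clog ?_).comp hgdiv
    rw [div_self hg0]; exact Complex.one_mem_slitPlane
  have hha : AnalyticAt ℂ h 0 :=
    analyticAt_const.mul ((analyticAt_const.mul hlog).cexp)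
  have hh0 : h 0 = r := by
    simp [hh, div_self hg0, Complex.log_one]
  -- h^j = g near 0
  have hgne : ∀ᶠ z in 𝓝 (0:ℂ), g z ≠ 0 := hg.continuousAt.eventually_ne hg0
  have hpow : ∀ᶠ z in 𝓝 (0:ℂ), h z ^ j = g z := by
    filter_upwards [hgne] with z hz
    have hdz : g z / g 0 ≠ 0 := div_ne_zero hz hg0
    rw [hh]
    rw [mul_pow, ← Complex.exp_nat_mul ((j:ℂ)⁻¹ * Complex.log (g z / g 0)) j, ← mul_assoc,
      mul_inv_cancel₀ hj0, one_mul, Complex.exp_log hdz, hrj, mul_div_cancel₀ _ hg0]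
  -- the conformal root ψ
  set ψ : ℂ → ℂ := fun z => z * h z with hψdef
  have hψ : AnalyticAt ℂ ψ 0 := analyticAt_id.mul hha
  have hψd : HasDerivAt ψ r 0 := by
    have := (hasDerivAt_id (0:ℂ)).mul hha.differentiableAt.hasDerivAt
    simp only [id_eq, one_mul, zero_mul, add_zero, hh0] at this; exact this
  have hψd0 : deriv ψ 0 = r := hψd.deriv
  have hψ0ne : deriv ψ 0 ≠ 0 := by rw [hψd0]; exact hr0
  -- K = ψ^j near 0
  have hKψ : ∀ᶠ z in 𝓝 (0:ℂ), K z = ψ z ^ j := by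
    filter_upwards [hfac, hpow] with z h1 h2
    rw [h1, ← h2, ← mul_pow]
  -- translate the symmetry equations
  have heq : ∀ (η : ℂ → ℂ), AnalyticAt ℂ η 0 → η 0 = 0 →
      (∀ᶠ z in 𝓝 (0:ℂ), K (η z) = K z) →
      (∀ᶠ z in 𝓝 (0:ℂ), ψ (η z) ^ j = ψ z ^ j) := by
    intro η hη hη0 hKη
    have hcont : Filter.Tendsto η (𝓝 0) (𝓝 (0:ℂ)) := by
      have := hη.continuousAt
      rwa [ContinuousAt, hη0] at this
    filter_upwards [hKη, hKψ, hcont.eventually hKψ] with z h1 h2 h3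
    rw [← h3, h1, h2]
  have e₁ := symmetry_root ψ hψ hψ0ne j hj η₁ hη₁ hη₁0 (heq η₁ hη₁ hη₁0 hKη₁)
  have e₂ := symmetry_root ψ hψ hψ0ne j hj η₂ hη₂ hη₂0 (heq η₂ hη₂ hη₂0 hKη₂)
  have eψ : ∀ᶠ z in 𝓝 (0:ℂ), ψ (η₁ z) = ψ (η₂ z) := by
    filter_upwards [e₁, e₂] with z h1 h2
    rw [h1, h2, hder]
  -- local injectivity of ψ via the inverse function theorem
  obtain ⟨p, hp⟩ := hψ
  have hsd : HasStrictDerivAt ψ r 0 := by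
    have hs := hp.hasStrictDerivAt
    rwa [show (p 1 fun _ => (1:ℂ)) = r from by
      rw [← hψd0, hs.hasDerivAt.deriv]] at hs
  have hfe := hsd.hasStrictFDerivAt_equiv hr0
  have hlinv := hfe.eventually_left_inverse
  have hcont₁ : Filter.Tendsto η₁ (𝓝 0) (𝓝 (0:ℂ)) := by
    have := hη₁.continuousAt; rwa [ContinuousAt, hη₁0] at this
  have hcont₂ : Filter.Tendsto η₂ (𝓝 0) (𝓝 (0:ℂ)) := by
    have := hη₂.continuousAt; rwa [ContinuousAt, hη₂0] at this
  filter_upwards [hcont₁.eventually hlinv, hcont₂.eventually hlinv, eψ] with z h1 h2 h3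
  rw [← h1, ← h2, h3]
end

section
/- Let K be holomorphic near x ∈ ℂ with val(K, x) = j ≥ 2, and let κ be a holomorphic injective germ at K(x) with κ(K(x)) = K(x). Then there exists a holomorphic injective germ δ at x with δ(x) = x, K(δ(z)) = κ(K(z)) for all z near x, and δ'(x)^j = κ'(K(x)). -/
open Topology Filter

lemma exists_analytic_local_inverse {f : ℂ → ℂ} {a : ℂ} (hf : AnalyticAt ℂ f a)
    (hd : deriv f a ≠ 0) :
    ∃ g : ℂ → ℂ, AnalyticAt ℂ g (f a) ∧ g (f a) = a ∧ deriv g (f a) = (deriv f a)⁻¹ ∧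
      (∀ᶠ z in 𝓝 a, g (f z) = z) ∧ (∀ᶠ w in 𝓝 (f a), f (g w) = w) := by
  set i : ℂ ≃L[ℂ] ℂ := ContinuousLinearEquiv.unitsEquivAut ℂ (Units.mk0 (deriv f a) hd) with hi
  have hfd : fderiv ℂ f a = (i : ℂ →L[ℂ] ℂ) := by
    ext
    show fderiv ℂ f a 1 = (1 : ℂ) * (Units.mk0 (deriv f a) hd : ℂ)
    rw [fderiv_apply_one_eq_deriv]
    simp
  have hs : HasStrictFDerivAt f (i : ℂ →L[ℂ] ℂ) a := hfd ▸ hf.hasStrictFDerivAt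
  refine ⟨hs.localInverse f i a, ?_, hs.localInverse_apply_image, ?_,
    hs.eventually_left_inverse, hs.eventually_right_inverse⟩
  · have := (hs.toOpenPartialHomeomorph f).analyticAt_symm' hs.mem_toOpenPartialHomeomorph_source
      (by rw [hs.toOpenPartialHomeomorph_coe]; exact hf) (by rw [hs.toOpenPartialHomeomorph_coe]; exact hfd)
    exact this
  · have := hs.to_localInverse.hasFDerivAt.hasDerivAt
    rw [this.deriv]
    simp [hi, ContinuousLinearEquiv.unitsEquivAut]

lemma exists_analytic_root {g : ℂ → ℂ} {x : ℂ} (hg : AnalyticAt ℂ g x) {j : ℕ} (hj : j ≠ 0)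
    {c : ℂ} (hc : c ≠ 0) (hcj : c ^ j = g x) :
    ∃ ρ : ℂ → ℂ, AnalyticAt ℂ ρ x ∧ ρ x = c ∧ ∀ᶠ z in 𝓝 x, ρ z ^ j = g z := by
  have hq : AnalyticAt ℂ (fun w : ℂ => w ^ j) c := analyticAt_id.pow j
  have hqd : deriv (fun w : ℂ => w ^ j) c ≠ 0 := by
    rw [deriv_pow_field]
    exact mul_ne_zero (Nat.cast_ne_zero.2 hj) (pow_ne_zero _ hc)
  obtain ⟨r, hr, hr0, _, _, hright⟩ := exists_analytic_local_inverse hq hqd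
  rw [hcj] at hr hr0 hright
  refine ⟨r ∘ g, hr.comp hg, hr0, ?_⟩
  have := hg.continuousAt.eventually hright
  filter_upwards [this] with z hz using hz


/-- `HasValency H x n` : the holomorphic map `H` has local valency `n` at `x`. -/
def HasValency (H : ℂ → ℂ) (x : ℂ) (n : ℕ) : Prop :=
  ∃ g : ℂ → ℂ, AnalyticAt ℂ g x ∧ g x ≠ 0 ∧
    ∀ᶠ z in 𝓝 x, H z - H x = (z - x) ^ n * g z

/-- Lifting lemma through a critical point: if `val(K, x) = j ≥ 2` and `κ` is a conformal
germ at `K x` fixing `K x`, then there is a conformal germ `δ` at `x` fixing `x` with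
`K ∘ δ = κ ∘ K` near `x` and `δ'(x)^j = κ'(K x)`. -/
theorem lift_conformal_germ_through_critical_point
    (K : ℂ → ℂ) (x : ℂ) (hK : AnalyticAt ℂ K x)
    (j : ℕ) (hj : 2 ≤ j) (hval : HasValency K x j)
    (κ : ℂ → ℂ) (hκ : AnalyticAt ℂ κ (K x)) (hκfix : κ (K x) = K x)
    (hκd : deriv κ (K x) ≠ 0) :
    ∃ δ : ℂ → ℂ, AnalyticAt ℂ δ x ∧ δ x = x ∧ deriv δ x ≠ 0 ∧
      (∀ᶠ z in 𝓝 x, K (δ z) = κ (K z)) ∧ deriv δ x ^ j = deriv κ (K x) := by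
  obtain ⟨g, hg, hgx, hKg⟩ := hval
  have hj0 : j ≠ 0 := by omega
  have hjpos : 0 < j := by omega
  -- the analytic factor `v = dslope κ (K x)` with `κ w - K x = (w - K x) * v w`
  obtain ⟨p, hp⟩ := hκ
  have hv : AnalyticAt ℂ (dslope κ (K x)) (K x) :=
    hp.has_fpower_series_dslope_fslope.analyticAt
  have hv0 : dslope κ (K x) (K x) = deriv κ (K x) := dslope_same κ (K x)
  set h : ℂ → ℂ := fun z => g z * dslope κ (K x) (K z) with hh
  have hha : AnalyticAt ℂ h x := hg.mul (hv.comp hK)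
  have hhx : h x = g x * deriv κ (K x) := by rw [hh]; simp [hv0]
  have hκK : ∀ᶠ z in 𝓝 x, κ (K z) - K x = (z - x) ^ j * h z := by
    filter_upwards [hKg] with z hz
    have hd := sub_smul_dslope κ (K x) (K z)
    rw [smul_eq_mul] at hd
    calc κ (K z) - K x = κ (K z) - κ (K x) := by rw [hκfix]
      _ = (K z - K x) * dslope κ (K x) (K z) := hd.symm
      _ = (z - x) ^ j * (g z * dslope κ (K x) (K z)) := by rw [hz]; ring
  -- roots
  obtain ⟨c, hcj⟩ := IsAlgClosed.exists_pow_nat_eq (g x) hjpos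
  have hc0 : c ≠ 0 := fun hc => hgx (by rw [← hcj, hc, zero_pow hj0])
  obtain ⟨d, hdj⟩ := IsAlgClosed.exists_pow_nat_eq (deriv κ (K x)) hjpos
  have hd0 : d ≠ 0 := fun hd => hκd (by rw [← hdj, hd, zero_pow hj0])
  obtain ⟨ρ, hρa, hρx, hρj⟩ := exists_analytic_root hg hj0 hc0 hcj
  have hcd : (c * d) ^ j = h x := by rw [mul_pow, hcj, hdj, hhx]
  obtain ⟨σ, hσa, hσx, hσj⟩ := exists_analytic_root hha hj0 (mul_ne_zero hc0 hd0) hcd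
  set φ : ℂ → ℂ := fun z => (z - x) * ρ z with hφ
  set ψ : ℂ → ℂ := fun z => (z - x) * σ z with hψ
  have hφa : AnalyticAt ℂ φ x := (analyticAt_id.sub analyticAt_const).mul hρa
  have hψa : AnalyticAt ℂ ψ x := (analyticAt_id.sub analyticAt_const).mul hσa
  have hφx : φ x = 0 := by simp [hφ]
  have hψx : ψ x = 0 := by simp [hψ]
  have hφd : HasDerivAt φ c x := by
    have h1 : HasDerivAt (fun z : ℂ => z - x) 1 x := (hasDerivAt_id x).sub_const x
    have h2 : HasDerivAt ρ (deriv ρ x) x := hρa.differentiableAt.hasDerivAt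
    have : HasDerivAt (fun z => (z - x) * ρ z) _ x := h1.mul h2
    simpa [hρx] using this
  have hψd : HasDerivAt ψ (c * d) x := by
    have h1 : HasDerivAt (fun z : ℂ => z - x) 1 x := (hasDerivAt_id x).sub_const x
    have h2 : HasDerivAt σ (deriv σ x) x := hσa.differentiableAt.hasDerivAt
    have : HasDerivAt (fun z => (z - x) * σ z) _ x := h1.mul h2
    simpa [hσx] using this
  have hφd0 : deriv φ x ≠ 0 := by rw [hφd.deriv]; exact hc0
  obtain ⟨r, hra, hr0, hrd, _, hright⟩ := exists_analytic_local_inverse hφa hφd0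
  rw [hφx] at hra hr0 hrd hright
  rw [hφd.deriv] at hrd
  -- the lift
  have hδa : AnalyticAt ℂ (r ∘ ψ) x := (hψx ▸ hra).comp hψa
  have hδx : (r ∘ ψ) x = x := by simp [Function.comp, hψx, hr0]
  have hδd : HasDerivAt (r ∘ ψ) (c⁻¹ * (c * d)) x := by
    have hrder : HasDerivAt r c⁻¹ (ψ x) := by
      rw [hψx, ← hrd]
      exact hra.differentiableAt.hasDerivAt
    exact hrder.comp x hψd
  have hδdval : deriv (r ∘ ψ) x = d := by
    rw [hδd.deriv]; field_simp
  refine ⟨r ∘ ψ, hδa, hδx, ?_, ?_, ?_⟩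
  · rw [hδdval]; exact hd0
  · -- functional equation
    have E1 : ∀ᶠ w in 𝓝 x, K w - K x = φ w ^ j := by
      filter_upwards [hKg, hρj] with w h1 h2
      rw [hφ]; simp only [mul_pow, h2]; exact h1
    have hδc : Filter.Tendsto (r ∘ ψ) (𝓝 x) (𝓝 x) := by
      have := hδa.continuousAt.tendsto
      rwa [hδx] at this
    have E2 : ∀ᶠ z in 𝓝 x, K ((r ∘ ψ) z) - K x = φ ((r ∘ ψ) z) ^ j := hδc.eventually E1
    have hψc : Filter.Tendsto ψ (𝓝 x) (𝓝 0) := by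
      have := hψa.continuousAt.tendsto
      rwa [hψx] at this
    have E3 : ∀ᶠ z in 𝓝 x, φ (r (ψ z)) = ψ z := hψc.eventually hright
    have E4 : ∀ᶠ z in 𝓝 x, κ (K z) - K x = ψ z ^ j := by
      filter_upwards [hκK, hσj] with z h1 h2
      rw [hψ]; simp only [mul_pow, h2]; exact h1
    filter_upwards [E2, E3, E4] with z h2 h3 h4
    have : K ((r ∘ ψ) z) - K x = κ (K z) - K x := by
      rw [h2, h4, Function.comp, h3]
    exact sub_left_inj.mp this
  · rw [hδdval]; exact hdj
end

section
/- Let β > 0. There is no Borel probability measure m on ℂ \ {0} such that m(exp(A)) = ∫_A |exp(z)|^β dm(z) for every Borel set A ⊆ ℂ \ {0} on which exp is injective. -/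
open MeasureTheory Set

/-- There is no Borel probability measure on `ℂ \ {0}` which is `β`-conformal for
`exp` with respect to the flat metric, for any `β > 0`:
no probability measure `m` with `m {0} = 0` can satisfy
`m (exp '' A) = ∫_A |exp z|^β dm` for all Borel sets `A ⊆ ℂ \ {0}` on which `exp`
is injective. -/
theorem no_conformal_measure_for_exp
    (β : ℝ) (hβ : 0 < β)
    (m : Measure ℂ) [IsProbabilityMeasure m] (hm0 : m {0} = 0)
    (hconf : ∀ A : Set ℂ, MeasurableSet A → A ⊆ {(0 : ℂ)}ᶜ →
      Set.InjOn Complex.exp A →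
      m (Complex.exp '' A) =
        ∫⁻ z in A, ENNReal.ofReal (‖Complex.exp z‖ ^ β) ∂m) :
    False := by
  have pi_pos := Real.pi_pos
  have pi_gt : (3 : ℝ) < Real.pi := Real.pi_gt_three
  -- Key lemma: exp-images of "boxes" in the upper half plane are null.
  have key : ∀ (c R : ℝ), 0 ≤ c → ∀ A : Set ℂ, MeasurableSet A →
      (∀ z ∈ A, z.im ∈ Ico c (c + 1)) → (∀ z ∈ A, z.re ≤ R) →
      m (Complex.exp '' A) = 0 := by
    intro c R hc A hA him hre
    set t : ℕ → ℂ := fun n => (((n : ℤ) + 1 : ℤ) : ℂ) * (2 * Real.pi * Complex.I) with ht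
    set f : ℕ → Set ℂ := fun n => (fun z => z + t n) '' A with hf
    have htim : ∀ n : ℕ, (t n).im = 2 * Real.pi * ((n : ℝ) + 1) := by
      intro n
      simp [ht, Complex.mul_im, Complex.add_im, Complex.add_re]
      ring
    -- f n is measurable
    have hfm : ∀ n, MeasurableSet (f n) := by
      intro n
      rw [hf]
      simp only [Set.image_add_right]
      exact hA.preimage (measurable_add_const _)
    -- exp image of f n equals exp image of A
    have hfexp : ∀ n, Complex.exp '' (f n) = Complex.exp '' A := by
      intro n
      rw [hf]
      simp only [Set.image_image]
      apply Set.image_congr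
      intro z _
      have h1 : Complex.exp (t n) = 1 := Complex.exp_int_mul_two_pi_mul_I _
      rw [Complex.exp_add, h1, mul_one]
    -- 0 ∉ f n
    have hf0 : ∀ n, f n ⊆ {(0 : ℂ)}ᶜ := by
      intro n x hx
      rcases hx with ⟨z, hz, rfl⟩
      simp only [Set.mem_compl_iff, Set.mem_singleton_iff]
      intro h
      have h0 : (z + t n).im = 0 := by rw [h]; simp
      rw [Complex.add_im, htim] at h0
      have h1 := (him z hz).1
      nlinarith [Nat.cast_nonneg (α := ℝ) n]
    -- exp is injective on f n
    have hfi : ∀ n, Set.InjOn Complex.exp (f n) := by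
      intro n x hx y hy hxy
      rcases hx with ⟨z, hz, rfl⟩
      rcases hy with ⟨w, hw, rfl⟩
      have hzw : Complex.exp z = Complex.exp w := by
        rw [Complex.exp_add, Complex.exp_add] at hxy
        exact mul_right_cancel₀ (Complex.exp_ne_zero _) hxy
      obtain ⟨k, hk⟩ := Complex.exp_eq_exp_iff_exists_int.mp hzw
      have him' : z.im = w.im + (k : ℝ) * (2 * Real.pi) := by
        have := congrArg Complex.im hk
        simpa [Complex.add_im, Complex.mul_im] using this
      have hz1 := him z hz; have hw1 := him w hw
      have hk0 : k = 0 := by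
        rcases lt_trichotomy (k : ℝ) 0 with h | h | h
        · have : (k : ℝ) ≤ -1 := by exact_mod_cast Int.le_of_lt_add_one (by exact_mod_cast h)
          nlinarith [hz1.1, hz1.2, hw1.1, hw1.2]
        · exact_mod_cast h
        · have : (1 : ℝ) ≤ (k : ℝ) := by exact_mod_cast h
          nlinarith [hz1.1, hz1.2, hw1.1, hw1.2]
      rw [hk0] at hk
      simp at hk
      rw [hk]
    -- pairwise disjoint
    have hdisj : Pairwise (Function.onFun Disjoint f) := by
      intro i j hij
      simp only [Function.onFun]
      rw [Set.disjoint_left]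
      rintro x ⟨z, hz, rfl⟩ ⟨w, hw, hwx⟩
      have him' : z.im + (t i).im = w.im + (t j).im := by
        have := congrArg Complex.im hwx
        simpa [Complex.add_im] using this.symm
      rw [htim, htim] at him'
      have hz1 := him z hz; have hw1 := him w hw
      rcases hij.lt_or_gt with h | h
      · have h' : (i : ℝ) + 1 ≤ (j : ℝ) := by exact_mod_cast h
        nlinarith [hz1.1, hz1.2, hw1.1, hw1.2]
      · have h' : (j : ℝ) + 1 ≤ (i : ℝ) := by exact_mod_cast h
        nlinarith [hz1.1, hz1.2, hw1.1, hw1.2]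
    -- the density is bounded on each f n
    set C : ENNReal := ENNReal.ofReal (Real.exp R ^ β) with hC
    have hbound : ∀ n, m (Complex.exp '' A) ≤ C * m (f n) := by
      intro n
      rw [← hfexp n, hconf (f n) (hfm n) (hf0 n) (hfi n)]
      calc ∫⁻ z in f n, ENNReal.ofReal (‖Complex.exp z‖ ^ β) ∂m
          ≤ ∫⁻ _ in f n, C ∂m := by
            apply setLIntegral_mono measurable_const
            intro x hx
            rcases hx with ⟨z, hz, rfl⟩
            apply ENNReal.ofReal_le_ofReal
            rw [Complex.norm_exp]
            apply Real.rpow_le_rpow (Real.exp_nonneg _) _ hβ.le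
            apply Real.exp_le_exp.mpr
            rw [Complex.add_re]
            have : (t n).re = 0 := by
              simp [ht, Complex.mul_re]
            rw [this, add_zero]
            exact hre z hz
        _ = C * m (f n) := setLIntegral_const _ _
    -- summing over n
    by_contra hne
    have hsum : ∑' n, m (f n) ≤ 1 := by
      rw [← measure_iUnion hdisj hfm]
      exact prob_le_one
    have hCne : C ≠ ⊤ := ENNReal.ofReal_ne_top
    have hmn : ∀ n, m (Complex.exp '' A) / C ≤ m (f n) := by
      intro n
      exact ENNReal.div_le_of_le_mul' (hbound n)
    have hdiv : m (Complex.exp '' A) / C ≠ 0 := by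
      simp only [ne_eq, ENNReal.div_eq_zero_iff]
      push_neg
      exact ⟨hne, hCne⟩
    have : (⊤ : ENNReal) ≤ 1 := by
      calc (⊤ : ENNReal) = ∑' _ : ℕ, m (Complex.exp '' A) / C :=
            (ENNReal.tsum_const_eq_top_of_ne_zero hdiv).symm
        _ ≤ ∑' n, m (f n) := ENNReal.tsum_le_tsum hmn
        _ ≤ 1 := hsum
    simp at this
  -- Cover ℂ \ {0} by exp-images of boxes
  set B : ℤ × ℕ → Set ℂ := fun p =>
    {z : ℂ | z.re ∈ Ico (p.1 : ℝ) (p.1 + 1) ∧ z.im ∈ Ico (p.2 : ℝ) (p.2 + 1)} with hB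
  have hBm : ∀ p, MeasurableSet (B p) := by
    intro p
    exact ((Complex.measurable_re measurableSet_Ico).inter
      (Complex.measurable_im measurableSet_Ico))
  have hBnull : ∀ p, m (Complex.exp '' B p) = 0 := by
    intro p
    exact key (p.2 : ℝ) ((p.1 : ℝ) + 1) (Nat.cast_nonneg _) (B p) (hBm p)
      (fun z hz => hz.2) (fun z hz => hz.1.2.le)
  have hcover : {(0 : ℂ)}ᶜ ⊆ ⋃ p : ℤ × ℕ, Complex.exp '' B p := by
    intro w hw
    have hw0 : w ≠ 0 := hw
    set z : ℂ := Complex.log w + 2 * Real.pi * Complex.I with hz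
    have hexp : Complex.exp z = w := by
      rw [hz, Complex.exp_add, Complex.exp_log hw0]
      rw [show (2 * (Real.pi : ℂ) * Complex.I) = ((1 : ℤ) : ℂ) * (2 * Real.pi * Complex.I) by push_cast; ring]
      rw [Complex.exp_int_mul_two_pi_mul_I, mul_one]
    have him : 0 ≤ z.im := by
      have h1 : -Real.pi < (Complex.log w).im := Complex.neg_pi_lt_log_im w
      have h2 : z.im = (Complex.log w).im + 2 * Real.pi := by
        rw [hz, Complex.add_im]
        norm_num [Complex.mul_im]
      rw [h2]; linarith
    refine Set.mem_iUnion.mpr ⟨⟨⌊z.re⌋, ⌊z.im⌋.toNat⟩, z, ⟨?_, ?_⟩, hexp⟩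
    · exact ⟨Int.floor_le _, Int.lt_floor_add_one _⟩
    · have : ((⌊z.im⌋.toNat : ℤ) : ℝ) = (⌊z.im⌋ : ℝ) := by
        rw [Int.toNat_of_nonneg (Int.floor_nonneg.mpr him)]
      constructor
      · calc ((⌊z.im⌋.toNat : ℕ) : ℝ) = (⌊z.im⌋ : ℝ) := by exact_mod_cast this
          _ ≤ z.im := Int.floor_le _
      · calc z.im < (⌊z.im⌋ : ℝ) + 1 := Int.lt_floor_add_one _
          _ = ((⌊z.im⌋.toNat : ℕ) : ℝ) + 1 := by rw [show ((⌊z.im⌋.toNat : ℕ) : ℝ) = (⌊z.im⌋ : ℝ) by exact_mod_cast this]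
  have h1 : m {(0 : ℂ)}ᶜ = 1 := by
    rw [measure_compl (measurableSet_singleton 0) (measure_ne_top m _), hm0,
      measure_univ, tsub_zero]
  have : m {(0 : ℂ)}ᶜ ≤ 0 := by
    calc m {(0 : ℂ)}ᶜ ≤ m (⋃ p : ℤ × ℕ, Complex.exp '' B p) := measure_mono hcover
      _ ≤ ∑' p : ℤ × ℕ, m (Complex.exp '' B p) := measure_iUnion_le _
      _ = 0 := by simp [hBnull]
  rw [h1] at this
  simp at this
end

section
/- Let R : ℂ → ℂ be a polynomial of degree d ≥ 2 acting on a compact totally invariant set J ⊆ ℂ (R^{-1}(J) = J), and let m be a non-atomic Borel probability measure on J satisfying m(R(A)) = ∫_A e^β dm = e^β m(A) for every Borel set A ⊆ J on which R is injective. If m gives zero mass to the finite set R(C) of critical values of R in J, then β = log d and m(R^{-1}(B)) = m(B) for every Borel set B ⊆ J, i.e. m is R-invariant. -/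
open MeasureTheory Set
open scoped ENNReal NNReal

/-- Local injectivity of a polynomial near a non-critical point. -/
lemma poly_loc_inj (R : Polynomial ℂ) {z : ℂ} (hz : R.derivative.eval z ≠ 0) :
    ∃ U : Set ℂ, IsOpen U ∧ z ∈ U ∧ Set.InjOn (fun w => R.eval w) U := by
  have hs : HasStrictDerivAt (fun w => R.eval w) (R.derivative.eval z) z :=
    R.hasStrictDerivAt z
  have hfd := hs.hasStrictFDerivAt_equiv hz
  refine ⟨(hfd.toOpenPartialHomeomorph _).source, (hfd.toOpenPartialHomeomorph _).open_source,
    hfd.mem_toOpenPartialHomeomorph_source, ?_⟩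
  have hcoe : ((hfd.toOpenPartialHomeomorph _ : OpenPartialHomeomorph ℂ ℂ) : ℂ → ℂ)
      = fun w => R.eval w := hfd.toOpenPartialHomeomorph_coe
  have := (hfd.toOpenPartialHomeomorph _).injOn
  rwa [hcoe] at this

/-- Fibers over non-critical values have exactly `natDegree` points. -/
lemma poly_fiber (R : Polynomial ℂ) (hd : 1 ≤ R.natDegree) {w : ℂ}
    (hw : w ∉ (fun z => R.eval z) '' {z : ℂ | R.derivative.eval z = 0}) :
    ∃ F : Finset ℂ, (↑F : Set ℂ) = {z : ℂ | R.eval z = w} ∧ F.card = R.natDegree := by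
  set p := R - Polynomial.C w with hp
  have hdeg : p.natDegree = R.natDegree := Polynomial.natDegree_sub_C
  have hp0 : p ≠ 0 := by
    intro h
    rw [h, Polynomial.natDegree_zero] at hdeg
    omega
  have hderiv : Polynomial.derivative p = Polynomial.derivative R := by
    simp [hp]
  have hroot : ∀ z, p.IsRoot z ↔ R.eval z = w := by
    intro z
    simp [hp, Polynomial.IsRoot, sub_eq_zero]
  have hnodup : p.roots.Nodup := by
    rw [Multiset.nodup_iff_count_le_one]
    intro a
    rw [Polynomial.count_roots]
    by_contra h
    push_neg at h
    have h2 := (Polynomial.one_lt_rootMultiplicity_iff_isRoot hp0).mp h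
    refine hw ⟨a, ?_, (hroot a).mp h2.1⟩
    have := h2.2
    rw [hderiv] at this
    exact this
  refine ⟨p.roots.toFinset, ?_, ?_⟩
  · ext z
    simp only [Multiset.mem_toFinset, Finset.coe_sort_coe, Set.mem_setOf_eq, Finset.mem_coe]
    rw [Polynomial.mem_roots hp0]
    exact hroot z
  · rw [Multiset.toFinset_card_of_nodup hnodup,
      Polynomial.splits_iff_card_roots.mp (IsAlgClosed.splits p), hdeg]

/-- A countable measurable partition of the complement of the critical set into
pieces on which the polynomial is injective. -/
lemma poly_cover (R : Polynomial ℂ) (hd : 2 ≤ R.natDegree) :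
    ∃ V : ℕ → Set ℂ, (∀ n, MeasurableSet (V n)) ∧ Pairwise (Function.onFun Disjoint V) ∧
      (∀ n, Set.InjOn (fun z => R.eval z) (V n)) ∧
      (⋃ n, V n) = {z : ℂ | R.derivative.eval z = 0}ᶜ := by
  classical
  set C : Set ℂ := {z : ℂ | R.derivative.eval z = 0} with hC
  have hCc : Cᶜ.Nonempty := by
    have hfin : C.Finite := by
      apply Polynomial.finite_setOf_isRoot
      intro h
      have := Polynomial.natDegree_eq_zero_of_derivative_eq_zero h
      omega
    rcases hfin.infinite_compl.nonempty with ⟨z, hz⟩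
    exact ⟨z, hz⟩
  have hU : ∀ z : ↥Cᶜ, ∃ U : Set ℂ, IsOpen U ∧ (z : ℂ) ∈ U ∧ U ⊆ Cᶜ ∧
      Set.InjOn (fun w => R.eval w) U := by
    intro z
    have hz : R.derivative.eval (z : ℂ) ≠ 0 := z.2
    obtain ⟨U, hUo, hzU, hinj⟩ := poly_loc_inj R hz
    have hCop : IsOpen (Cᶜ) := by
      rw [hC]
      exact (isClosed_eq (R.derivative.continuous) continuous_const).isOpen_compl
    exact ⟨U ∩ Cᶜ, hUo.inter hCop, ⟨hzU, z.2⟩, Set.inter_subset_right,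
      hinj.mono Set.inter_subset_left⟩
  choose U hUo hUz hUc hUinj using hU
  obtain ⟨T, hTc, hTU⟩ := TopologicalSpace.isOpen_iUnion_countable U hUo
  have hUnion : ⋃ i, U i = Cᶜ := by
    apply Set.Subset.antisymm
    · exact Set.iUnion_subset hUc
    · intro z hz
      exact Set.mem_iUnion.mpr ⟨⟨z, hz⟩, hUz ⟨z, hz⟩⟩
  have hTne : T.Nonempty := by
    rcases hCc with ⟨z, hz⟩
    have : z ∈ ⋃ i ∈ T, U i := by rw [hTU, hUnion]; exact hz
    rcases Set.mem_iUnion₂.mp this with ⟨i, hi, _⟩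
    exact ⟨i, hi⟩
  obtain ⟨g, hg⟩ := hTc.exists_eq_range hTne
  set W : ℕ → Set ℂ := fun n => U (g n) with hW
  have hWU : ⋃ n, W n = Cᶜ := by
    rw [← hUnion, ← hTU, hg]
    exact (Set.biUnion_range).symm ▸ rfl
  refine ⟨disjointed W, ?_, disjoint_disjointed W, ?_, ?_⟩
  · exact MeasurableSet.disjointed fun n => (hUo (g n)).measurableSet
  · exact fun n => (hUinj (g n)).mono (disjointed_subset W n)
  · rw [iUnion_disjointed, hWU]

/-- Lyubich-type rigidity: if `R` is a polynomial of degree `d ≥ 2`, `J` a compact totally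
invariant set, and `m` a non-atomic `e^β`-conformal probability measure on `J` giving no
mass to the critical values of `R`, then `β = log d` and `m` is `R`-invariant. -/
theorem constant_conformal_measure_is_invariant
    (R : Polynomial ℂ) (hd : 2 ≤ R.natDegree)
    (J : Set ℂ) (hJ : IsCompact J)
    (hinv : (fun z => R.eval z) ⁻¹' J = J)
    (β : ℝ)
    (m : Measure ℂ) [IsProbabilityMeasure m]
    (hJfull : m Jᶜ = 0)
    (hna : ∀ z : ℂ, m {z} = 0)
    (hconf : ∀ A : Set ℂ, MeasurableSet A → A ⊆ J →
      Set.InjOn (fun z => R.eval z) A →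
      m ((fun z => R.eval z) '' A) = ENNReal.ofReal (Real.exp β) * m A)
    (hcrit : m ((fun z => R.eval z) '' {z : ℂ | R.derivative.eval z = 0}) = 0) :
    β = Real.log R.natDegree ∧
    ∀ B : Set ℂ, MeasurableSet B → B ⊆ J →
      m ((fun z => R.eval z) ⁻¹' B) = m B := by
  classical
  set f : ℂ → ℂ := fun z => R.eval z with hfdef
  set C : Set ℂ := {z : ℂ | R.derivative.eval z = 0} with hCdef
  have hfc : Continuous f := R.continuous
  have hCfin : C.Finite := by
    apply Polynomial.finite_setOf_isRoot
    intro h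
    have := Polynomial.natDegree_eq_zero_of_derivative_eq_zero h
    omega
  have hCm : m C = 0 := by
    have : NullSingletonClass m := ⟨hna⟩
    exact hCfin.countable.measure_zero m
  obtain ⟨V, hVm, hVd, hVinj, hVU⟩ := poly_cover R hd
  -- the choice function picking the piece of the partition containing a point
  set e : ℂ → ℕ := fun z => if h : ∃ n, z ∈ V n then h.choose else 0 with hedef
  have heV : ∀ z : ℂ, z ∉ C → z ∈ V (e z) := by
    intro z hz
    have hz' : ∃ n, z ∈ V n := by
      rw [← Set.mem_iUnion, hVU]
      exact hz
    simp only [hedef, dif_pos hz']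
    exact hz'.choose_spec
  -- key identity
  have key : ∀ B : Set ℂ, MeasurableSet B → B ⊆ J →
      ENNReal.ofReal (Real.exp β) * m (f ⁻¹' B) = (R.natDegree : ℝ≥0∞) * m B := by
    intro B hBm hBJ
    set A : ℕ → Set ℂ := fun n => V n ∩ f ⁻¹' B with hA
    have hAm : ∀ n, MeasurableSet (A n) := fun n =>
      (hVm n).inter (hBm.preimage hfc.measurable)
    have hAJ : ∀ n, A n ⊆ J := by
      intro n z hz
      have : f z ∈ J := hBJ hz.2
      rw [← hinv]
      exact this
    have hAinj : ∀ n, Set.InjOn f (A n) := fun n => (hVinj n).mono Set.inter_subset_left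
    have hAd : Pairwise (Function.onFun Disjoint A) := fun i j hij =>
      (hVd hij).mono Set.inter_subset_left Set.inter_subset_left
    have hS : ∀ n, m (f '' A n) = ENNReal.ofReal (Real.exp β) * m (A n) := fun n =>
      hconf (A n) (hAm n) (hAJ n) (hAinj n)
    have hSm : ∀ n, MeasurableSet (f '' A n) := fun n =>
      (hAm n).image_of_continuousOn_injOn hfc.continuousOn (hAinj n)
    have hSB : ∀ n, f '' A n ⊆ B := by
      rintro n w ⟨z, hz, rfl⟩
      exact hz.2
    have hpre : m (f ⁻¹' B) = ∑' n, m (A n) := by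
      have h1 : f ⁻¹' B ∩ Cᶜ = ⋃ n, A n := by
        rw [← hVU, Set.inter_iUnion]
        apply Set.iUnion_congr
        intro n
        rw [hA, Set.inter_comm]
      have h2 : m (f ⁻¹' B ∩ Cᶜ) = m (f ⁻¹' B) :=
        measure_inter_conull (by rwa [compl_compl])
      rw [← h2, h1, measure_iUnion hAd hAm]
    have hcount : ∑' n, m (f '' A n) = (R.natDegree : ℝ≥0∞) * m B := by
      have hmeq : ∀ n, m (f '' A n)
          = ∫⁻ w, (f '' A n).indicator (fun _ => (1 : ℝ≥0∞)) w ∂m := by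
        intro n
        rw [lintegral_indicator (hSm n)]
        simp
      calc ∑' n, m (f '' A n)
          = ∑' n, ∫⁻ w, (f '' A n).indicator (fun _ => (1 : ℝ≥0∞)) w ∂m := by
            exact tsum_congr hmeq
        _ = ∫⁻ w, ∑' n, (f '' A n).indicator (fun _ => (1 : ℝ≥0∞)) w ∂m :=
            (lintegral_tsum fun n =>
              (measurable_one.indicator (hSm n)).aemeasurable).symm
        _ = ∫⁻ w, (R.natDegree : ℝ≥0∞) * B.indicator (fun _ => (1 : ℝ≥0∞)) w ∂m := by
            apply lintegral_congr_ae
            have hae : ∀ᵐ w ∂m, w ∉ f '' C := by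
              rw [ae_iff]
              simpa only [not_not, Set.setOf_mem_eq] using hcrit
            filter_upwards [hae] with w hw
            by_cases hwB : w ∈ B
            · obtain ⟨F, hFset, hFcard⟩ := poly_fiber R (by omega) hw
              have hFz : ∀ z ∈ F, f z = w := by
                intro z hz
                have : z ∈ ({z : ℂ | R.eval z = w} : Set ℂ) := hFset ▸ hz
                exact this
              have hFC : ∀ z ∈ F, z ∉ C := by
                intro z hz hzc
                exact hw ⟨z, hzc, hFz z hz⟩
              have hmem : ∀ n : ℕ, w ∈ f '' A n ↔ n ∈ F.image e := by
                intro n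
                constructor
                · rintro ⟨z, hz, rfl⟩
                  have hzF : f z ∈ f '' A n := ⟨z, hz, rfl⟩
                  have hzF' : z ∈ F := by
                    have hm : z ∈ (↑F : Set ℂ) := by
                      rw [hFset]
                      exact rfl
                    exact Finset.mem_coe.mp hm
                  have hzC : z ∉ C := fun hzc => hw ⟨z, hzc, rfl⟩
                  have hz1 : z ∈ V (e z) := heV z hzC
                  have hz2 : z ∈ V n := hz.1
                  have hne : e z = n := by
                    by_contra hne
                    exact (hVd hne).le_bot ⟨hz1, hz2⟩
                  rw [← hne]
                  exact Finset.mem_image_of_mem e hzF'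
                · intro hn
                  obtain ⟨z, hzF, rfl⟩ := Finset.mem_image.mp hn
                  have hzw : f z = w := hFz z hzF
                  have hzC : z ∉ C := hFC z hzF
                  exact ⟨z, ⟨heV z hzC, by rw [Set.mem_preimage, hzw]; exact hwB⟩, hzw⟩
              have hinjF : Set.InjOn e ↑F := by
                intro z1 h1 z2 h2 hee
                have hv1 : z1 ∈ V (e z1) := heV z1 (hFC z1 h1)
                have hv2 : z2 ∈ V (e z1) := hee ▸ heV z2 (hFC z2 h2)
                have hfz : f z1 = f z2 := by
                  rw [hFz z1 (Finset.mem_coe.mp h1), hFz z2 (Finset.mem_coe.mp h2)]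
                exact hVinj (e z1) hv1 hv2 hfz
              have hcardT : (F.image e).card = R.natDegree := by
                rw [Finset.card_image_of_injOn hinjF, hFcard]
              have hterm : ∀ n ∉ F.image e,
                  (f '' A n).indicator (fun _ => (1 : ℝ≥0∞)) w = 0 := by
                intro n hn
                exact Set.indicator_of_notMem (fun hwn => hn ((hmem n).mp hwn)) _
              rw [tsum_eq_sum hterm,
                Finset.sum_congr rfl (fun n hn =>
                  Set.indicator_of_mem ((hmem n).mpr hn) (fun _ => (1 : ℝ≥0∞))),
                Finset.sum_const, nsmul_eq_mul, mul_one, hcardT,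
                Set.indicator_of_mem hwB, mul_one]
            · have hL : ∀ n, (f '' A n).indicator (fun _ => (1 : ℝ≥0∞)) w = 0 := by
                intro n
                exact Set.indicator_of_notMem (fun hwn => hwB (hSB n hwn)) _
              simp only [hL, tsum_zero, Set.indicator_of_notMem hwB, mul_zero]
        _ = (R.natDegree : ℝ≥0∞) * m B := by
            rw [lintegral_const_mul' _ _ (by simp), lintegral_indicator hBm]
            simp
    calc ENNReal.ofReal (Real.exp β) * m (f ⁻¹' B)
        = ENNReal.ofReal (Real.exp β) * ∑' n, m (A n) := by rw [hpre]
      _ = ∑' n, ENNReal.ofReal (Real.exp β) * m (A n) := ENNReal.tsum_mul_left.symm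
      _ = ∑' n, m (f '' A n) := by
          exact tsum_congr fun n => (hS n).symm
      _ = (R.natDegree : ℝ≥0∞) * m B := hcount
  have hJm : MeasurableSet J := hJ.measurableSet
  have hmJ : m J = 1 := by
    have h := measure_add_measure_compl (μ := m) hJm
    rw [hJfull, add_zero, measure_univ] at h
    exact h
  have hkeyJ := key J hJm subset_rfl
  rw [show f ⁻¹' J = J from hinv, hmJ, mul_one, mul_one] at hkeyJ
  have hdpos : (0 : ℝ) < R.natDegree := by
    have : 0 < R.natDegree := by omega
    exact_mod_cast this
  have hexp : Real.exp β = (R.natDegree : ℝ) := by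
    rw [show ((R.natDegree : ℝ≥0∞)) = ENNReal.ofReal (R.natDegree : ℝ) by
      rw [ENNReal.ofReal_natCast]] at hkeyJ
    exact (ENNReal.ofReal_eq_ofReal_iff (Real.exp_pos β).le hdpos.le).mp hkeyJ
  constructor
  · rw [← hexp, Real.log_exp]
  · intro B hBm hBJ
    have h := key B hBm hBJ
    rw [hkeyJ] at h
    exact (ENNReal.mul_right_inj
      (by exact_mod_cast (by omega : R.natDegree ≠ 0)) (ENNReal.natCast_ne_top _)).mp h
end

section
/- Let A be a C*-algebra, α and α¹ strongly continuous one-parameter automorphism groups of A, and (u_t)_{t∈ℝ} a strictly continuous one-parameter group of unitaries in the multiplier algebra M(A), each u_t fixed by both α and α¹, such that u_t α_t(a) u_t* = α¹_t(a) for all t, a. Suppose h ∈ A is a positive invertible element, fixed by α, with u_t = h^{-2it/β} (i.e., u_t implements the perturbation by h). If ω is a β-KMS state for α with ω(h²) > 0, then the state a ↦ ω(hah)/ω(h²) is a β-KMS state for α¹. -/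
open Topology Filter

open scoped ComplexOrder in
private lemma aux_spec_pos {A : Type} [CStarAlgebra A] [PartialOrder A] [StarOrderedRing A]
    (h : A) (hpos : 0 ≤ h) (hunit : IsUnit h) :
    ∀ x ∈ spectrum ℂ h, 0 < x.re ∧ x.im = 0 ∧ x ≠ 0 := by
  intro x hx
  have h0 : x ≠ 0 := fun hc => spectrum.zero_notMem ℂ hunit (hc ▸ hx)
  have h1 : (0 : ℂ) ≤ x := spectrum_nonneg_of_nonneg hpos hx
  rw [Complex.le_def] at h1
  simp only [Complex.zero_re, Complex.zero_im] at h1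
  refine ⟨lt_of_le_of_ne h1.1 ?_, h1.2.symm, h0⟩
  intro hre
  exact h0 (Complex.ext hre.symm h1.2.symm)

private lemma aux_cpow_cfc {A : Type} [CStarAlgebra A] [PartialOrder A] [StarOrderedRing A]
    (h : A) (hpos : 0 ≤ h) (hunit : IsUnit h) (w : ℂ) :
    cfc (fun x : ℂ => x ^ w) h = NormedSpace.exp (w • cfc Complex.log h) := by
  have hsa : IsStarNormal h := (IsSelfAdjoint.of_nonneg hpos).isStarNormal
  have hsp := aux_spec_pos h hpos hunit
  have hslit : ∀ x ∈ spectrum ℂ h, x ∈ Complex.slitPlane := fun x hx =>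
    Complex.mem_slitPlane_iff.mpr (Or.inl (hsp x hx).1)
  have hlog : ContinuousOn Complex.log (spectrum ℂ h) := fun x hx =>
    (continuousAt_clog (hslit x hx)).continuousWithinAt
  have hf : ContinuousOn (fun x : ℂ => w * Complex.log x) (spectrum ℂ h) :=
    continuousOn_const.mul hlog
  have hg : ContinuousOn Complex.exp ((fun x : ℂ => w * Complex.log x) '' spectrum ℂ h) :=
    Complex.continuous_exp.continuousOn
  calc cfc (fun x : ℂ => x ^ w) h
      = cfc (fun x : ℂ => Complex.exp (w * Complex.log x)) h := by
        apply cfc_congr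
        intro x hx
        show x ^ w = Complex.exp (w * Complex.log x)
        rw [Complex.cpow_def_of_ne_zero (hsp x hx).2.2, mul_comm]
    _ = cfc Complex.exp (cfc (fun x : ℂ => w * Complex.log x) h) :=
        cfc_comp' Complex.exp (fun x : ℂ => w * Complex.log x) h hg hf
    _ = NormedSpace.exp (cfc (fun x : ℂ => w * Complex.log x) h) :=
        CFC.complex_exp_eq_normedSpace_exp (cfc_predicate (fun x : ℂ => w * Complex.log x) h)
    _ = NormedSpace.exp (w • cfc Complex.log h) := by
        rw [cfc_const_mul w Complex.log h hlog]

private lemma aux_star_cpow_cfc {A : Type} [CStarAlgebra A] [PartialOrder A] [StarOrderedRing A]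
    (h : A) (hpos : 0 ≤ h) (hunit : IsUnit h) (w : ℂ) :
    star (cfc (fun x : ℂ => x ^ w) h) = cfc (fun x : ℂ => x ^ ((starRingEnd ℂ) w)) h := by
  rw [← cfc_star]
  apply cfc_congr
  intro x hx
  have hsp := aux_spec_pos h hpos hunit x hx
  have harg : x.arg = 0 := Complex.arg_eq_zero_iff.mpr ⟨le_of_lt hsp.1, hsp.2.1⟩
  have hlog : (starRingEnd ℂ) (Complex.log x) = Complex.log x :=
    Complex.conj_eq_iff_im.mpr (by rw [Complex.log_im, harg])
  show (starRingEnd ℂ) (x ^ w) = x ^ ((starRingEnd ℂ) w)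
  rw [Complex.cpow_def_of_ne_zero hsp.2.2, Complex.cpow_def_of_ne_zero hsp.2.2,
    ← Complex.exp_conj, map_mul, hlog]

variable {A : Type} [CStarAlgebra A]

/-- `ω` is a `β`-KMS state for the one-parameter automorphism group `α`. -/
def IsKMSState (α : ℝ → (A ≃⋆ₐ[ℂ] A)) (β : ℝ) (ω : A → ℂ) : Prop :=
  IsLinearMap ℂ ω ∧ ω 1 = 1 ∧
  (∀ a : A, 0 ≤ (ω (star a * a)).re ∧ (ω (star a * a)).im = 0) ∧
  ∀ (a b : A) (F : ℂ → A), Differentiable ℂ F → (∀ t : ℝ, F (t : ℂ) = α t b) →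
    ω (a * F (Complex.I * (β : ℂ))) = ω (b * a)

/-- Perturbation of KMS states: if `α'_t = Ad(u_t) ∘ α_t` with `u_t = h^{-2it/β}` for a
positive invertible `α`-fixed element `h`, and `ω` is a `β`-KMS state for `α` with
`ω(h²) > 0`, then `a ↦ ω(h a h)/ω(h²)` is a `β`-KMS state for `α'`. -/
theorem kms_state_perturbation
    [PartialOrder A] [StarOrderedRing A]
    (α α' : ℝ → (A ≃⋆ₐ[ℂ] A))
    (hα0 : ∀ a : A, α 0 a = a) (halpha'0 : ∀ a : A, α' 0 a = a)
    (hαadd : ∀ s t : ℝ, ∀ a : A, α (s + t) a = α s (α t a))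
    (halpha'add : ∀ s t : ℝ, ∀ a : A, α' (s + t) a = α' s (α' t a))
    (hαcont : ∀ a : A, Continuous fun t : ℝ => α t a)
    (halpha'cont : ∀ a : A, Continuous fun t : ℝ => α' t a)
    (β : ℝ) (hβ : β ≠ 0)
    (u : ℝ → A) (hucont : Continuous u)
    (huni : ∀ t : ℝ, u t * star (u t) = 1 ∧ star (u t) * u t = 1)
    (hufix : ∀ s t : ℝ, α t (u s) = u s ∧ α' t (u s) = u s)
    (hconj : ∀ (t : ℝ) (a : A), u t * α t a * star (u t) = α' t a)
    (h : A) (hpos : 0 ≤ h) (hunit : IsUnit h) (hfix : ∀ t : ℝ, α t h = h)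
    (hu : ∀ t : ℝ, u t = cfc (fun x : ℂ => x ^ (-2 * Complex.I * (t : ℂ) / (β : ℂ))) h)
    (ω : A → ℂ) (hω : IsKMSState α β ω)
    (hωh : 0 < (ω (h * h)).re) (hωh' : (ω (h * h)).im = 0) :
    IsKMSState α' β (fun a => ω (h * a * h) / ω (h * h)) := by
  obtain ⟨ωlin, ω1, ωpos, ωkms⟩ := hω
  have hβc : (β : ℂ) ≠ 0 := Complex.ofReal_ne_zero.mpr hβ
  have hD0 : ω (h * h) ≠ 0 := fun hc => by simp [hc] at hωh
  have hsa : IsSelfAdjoint h := IsSelfAdjoint.of_nonneg hpos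
  have hsn : IsStarNormal h := hsa.isStarNormal
  -- traciality with respect to h
  have htr : ∀ c : A, ω (c * h) = ω (h * c) := fun c =>
    ωkms c h (fun _ => h) (differentiable_const h) (fun t => (hfix t).symm)
  -- the unitary one-parameter family, complexified
  set ℓ : A := cfc Complex.log h with hℓ
  have hP : ∀ w : ℂ, cfc (fun x : ℂ => x ^ w) h = NormedSpace.exp (w • ℓ) := fun w =>
    aux_cpow_cfc h hpos hunit w
  set V : ℂ → A := fun z => NormedSpace.exp (z • ((2 * Complex.I / (β : ℂ)) • ℓ)) with hV
  have hVP : ∀ z : ℂ, V z = cfc (fun x : ℂ => x ^ (2 * Complex.I * z / (β : ℂ))) h := by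
    intro z
    rw [hP, hV]
    simp only [smul_smul]
    congr 2
    ring
  have hVmul : ∀ z w : ℂ, V z * V w = V (z + w) := by
    intro z w
    rw [hV]
    simp only
    let +nondep : NormedAlgebra ℚ A := .restrictScalars ℚ ℂ A
    rw [← NormedSpace.exp_add_of_commute (((Commute.refl _).smul_left z).smul_right w), add_smul]
  have hVdiff : Differentiable ℂ V := fun z =>
    (hasDerivAt_exp_smul_const ((2 * Complex.I / (β : ℂ)) • ℓ) z).differentiableAt
  have hVinv : ∀ z : ℂ, V z * V (-z) = 1 ∧ V (-z) * V z = 1 := by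
    intro z
    constructor <;> rw [hVmul] <;> simp [hV, NormedSpace.exp_zero]
  have hVstar : ∀ t : ℝ, V (t : ℂ) = star (u t) := by
    intro t
    have hc : (starRingEnd ℂ) (-2 * Complex.I * (t : ℂ) / (β : ℂ))
        = 2 * Complex.I * (t : ℂ) / (β : ℂ) := by
      simp only [map_div₀, map_mul, map_neg, Complex.conj_ofReal, Complex.conj_I, map_ofNat]
      ring
    rw [hu t, aux_star_cpow_cfc h hpos hunit, hc, hVP]
  have hVu : ∀ t : ℝ, V (-(t : ℂ)) = u t := by
    intro t
    calc V (-(t : ℂ)) = V (-(t : ℂ)) * (star (u t) * u t) := by rw [(huni t).2, mul_one]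
      _ = (V (-(t : ℂ)) * V (t : ℂ)) * u t := by rw [hVstar t, mul_assoc]
      _ = u t := by rw [(hVinv (t : ℂ)).2, one_mul]
  -- V at -iβ is h²
  have hq2 : V (-(Complex.I * (β : ℂ))) = h * h := by
    have he : 2 * Complex.I * (-(Complex.I * (β : ℂ))) / (β : ℂ) = ((2 : ℕ) : ℂ) := by
      rw [show 2 * Complex.I * (-(Complex.I * (β : ℂ))) = 2 * (β : ℂ) by
        linear_combination (-2 * (β : ℂ)) * Complex.I_sq, mul_div_assoc, div_self hβc, mul_one]
      norm_num
    rw [hVP, he]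
    calc cfc (fun x : ℂ => x ^ ((2 : ℕ) : ℂ)) h = cfc (fun x : ℂ => x ^ (2 : ℕ)) h := by
          apply cfc_congr
          intro x _
          exact Complex.cpow_natCast x 2
      _ = h ^ 2 := cfc_pow_id h 2
      _ = h * h := sq h
  set q : A := V (Complex.I * (β : ℂ)) with hqdef
  have hq1 : q * (h * h) = 1 := by rw [← hq2, hqdef, (hVinv _).1]
  have hq1' : (h * h) * q = 1 := by rw [← hq2, hqdef, (hVinv _).2]
  have hfixq : ∀ t : ℝ, α t q = q := by
    intro t
    have h1 : α t q * (h * h) = 1 := by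
      rw [show α t q * (h * h) = α t q * α t (h * h) by rw [map_mul, hfix t],
        ← map_mul, hq1, map_one]
    calc α t q = α t q * ((h * h) * q) := by rw [hq1', mul_one]
      _ = (α t q * (h * h)) * q := by rw [← mul_assoc]
      _ = q := by rw [h1, one_mul]
  refine ⟨⟨?_, ?_⟩, ?_, ?_, ?_⟩
  · intro x y
    simp only [mul_add, add_mul, ωlin.map_add, add_div]
  · intro c x
    simp only [mul_smul_comm, smul_mul_assoc, ωlin.map_smul, smul_eq_mul, mul_div_assoc]
  · simp only [mul_one]
    exact div_self hD0
  · intro a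
    have key : h * (star a * a) * h = star (a * h) * (a * h) := by
      rw [star_mul, hsa.star_eq]
      noncomm_ring
    have hp := ωpos (a * h)
    simp only [key]
    constructor
    · rw [Complex.div_re, hp.2, hωh']
      simp only [mul_zero, zero_div, add_zero, zero_mul]
      exact div_nonneg (mul_nonneg hp.1 hωh.le) (Complex.normSq_nonneg _)
    · rw [Complex.div_im, hp.2, hωh']
      simp
  · intro a b F hFdiff hFt
    set G : ℂ → A := fun z => V z * F z * V (-z) with hG
    have hGdiff : Differentiable ℂ G :=
      (hVdiff.mul hFdiff).mul (hVdiff.comp differentiable_id.neg)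
    have hGt : ∀ t : ℝ, G (t : ℂ) = α t b := by
      intro t
      show V (t : ℂ) * F (t : ℂ) * V (-(t : ℂ)) = α t b
      rw [hFt t, ← hconj t b, hVstar t, hVu t]
      calc star (u t) * (u t * α t b * star (u t)) * u t
          = (star (u t) * u t) * α t b * (star (u t) * u t) := by noncomm_ring
        _ = α t b := by rw [(huni t).2, one_mul, mul_one]
    have hG0t : ∀ t : ℝ, G (t : ℂ) * (q * h) = α t (b * (q * h)) := by
      intro t
      rw [map_mul, map_mul, hGt t, hfixq t, hfix t]
    have hmain := ωkms (h * a * (h * h)) (b * (q * h)) (fun z => G z * (q * h))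
      (hGdiff.mul_const (q * h)) hG0t
    have hFIβ : F (Complex.I * (β : ℂ)) = (h * h) * G (Complex.I * (β : ℂ)) * q := by
      show F (Complex.I * (β : ℂ)) =
        (h * h) * (V (Complex.I * (β : ℂ)) * F (Complex.I * (β : ℂ)) *
          V (-(Complex.I * (β : ℂ)))) * q
      rw [← hq2, hqdef]
      calc F (Complex.I * (β : ℂ))
          = (V (-(Complex.I * (β : ℂ))) * V (Complex.I * (β : ℂ))) * F (Complex.I * (β : ℂ)) *
            (V (-(Complex.I * (β : ℂ))) * V (Complex.I * (β : ℂ))) := by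
            rw [(hVinv (Complex.I * (β : ℂ))).2, one_mul, mul_one]
        _ = _ := by noncomm_ring
    show ω (h * (a * F (Complex.I * (β : ℂ))) * h) / ω (h * h)
        = ω (h * (b * a) * h) / ω (h * h)
    congr 1
    calc ω (h * (a * F (Complex.I * (β : ℂ))) * h)
        = ω ((h * a * (h * h)) * (G (Complex.I * (β : ℂ)) * (q * h))) := by
          rw [hFIβ]
          congr 1
          noncomm_ring
      _ = ω ((b * (q * h)) * (h * a * (h * h))) := hmain
      _ = ω ((b * a * h) * h) := by
          congr 1
          calc (b * (q * h)) * (h * a * (h * h))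
              = b * (q * (h * h)) * (a * (h * h)) := by noncomm_ring
            _ = (b * a * h) * h := by rw [hq1]; noncomm_ring
      _ = ω (h * (b * a * h)) := htr (b * a * h)
      _ = ω (h * (b * a) * h) := by congr 1; noncomm_ring
end

section
/- Let H : S → S be a non-constant holomorphic map of a connected Riemann surface, let x ∈ S, and suppose x is pre-periodic but not pre-critical for H: there exist minimal n ≥ 0 and p ≥ 1 with H^{n+p}(x) = H^n(x), and val(H^k, x) = 1 for all k. Then every holomorphic injective germ η at x with η(x) = x satisfying H^m(η(z)) = H^{kp+m}(z) near x for some m ≥ n and k ∈ ℤ is uniquely determined (as a germ) by k; namely η = (H^n)^{-1} ∘ H^{kp+n} near x, where (H^n)^{-1} is the local inverse of the injective germ H^n at x. -/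
open Topology Filter Function

/-- A holomorphic function with nonvanishing derivative at a point has a local
holomorphic inverse there. -/
private lemma exists_local_inverse (f : ℂ → ℂ) (hf : Differentiable ℂ f) (x : ℂ)
    (hd : deriv f x ≠ 0) :
    ∃ G : ℂ → ℂ, AnalyticAt ℂ G (f x) ∧ ContinuousAt G (f x) ∧ G (f x) = x ∧
      (∀ᶠ z in 𝓝 x, G (f z) = z) ∧ (∀ᶠ w in 𝓝 (f x), f (G w) = w) := by
  have hcd : ContDiff ℂ 1 f := hf.contDiff
  have hsd : ∀ z : ℂ, HasStrictDerivAt f (deriv f z) z := fun z =>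
    hcd.hasStrictDerivAt one_ne_zero
  have hF := (hsd x).hasStrictFDerivAt_equiv hd
  refine ⟨hF.localInverse f _ x, ?_, hF.localInverse_continuousAt,
    hF.localInverse_apply_image, hF.eventually_left_inverse, hF.eventually_right_inverse⟩
  rw [hF.localInverse_def]
  have hderiv_cont : Continuous (deriv f) := hcd.continuous_deriv le_rfl
  have hopen : IsOpen {z : ℂ | deriv f z ≠ 0} :=
    isOpen_compl_singleton.preimage hderiv_cont
  have hU : IsOpen ((hF.toOpenPartialHomeomorph f).target ∩
      (hF.toOpenPartialHomeomorph f).symm ⁻¹' {z : ℂ | deriv f z ≠ 0}) :=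
    (hF.toOpenPartialHomeomorph f).isOpen_inter_preimage_symm hopen
  have hsymmx : (hF.toOpenPartialHomeomorph f).symm (f x) = x := by
    rw [← hF.localInverse_def]; exact hF.localInverse_apply_image
  have hmem : f x ∈ (hF.toOpenPartialHomeomorph f).target ∩
      (hF.toOpenPartialHomeomorph f).symm ⁻¹' {z : ℂ | deriv f z ≠ 0} := by
    refine ⟨hF.image_mem_toOpenPartialHomeomorph_target, ?_⟩
    show deriv f ((hF.toOpenPartialHomeomorph f).symm (f x)) ≠ 0
    rw [hsymmx]; exact hd
  have hdiff : DifferentiableOn ℂ (hF.toOpenPartialHomeomorph f).symm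
      ((hF.toOpenPartialHomeomorph f).target ∩
        (hF.toOpenPartialHomeomorph f).symm ⁻¹' {z : ℂ | deriv f z ≠ 0}) := by
    intro w hw
    have hw2 : deriv f ((hF.toOpenPartialHomeomorph f).symm w) ≠ 0 := hw.2
    have hda : HasDerivAt (hF.toOpenPartialHomeomorph f)
        (deriv f ((hF.toOpenPartialHomeomorph f).symm w))
        ((hF.toOpenPartialHomeomorph f).symm w) := by
      have := hsd ((hF.toOpenPartialHomeomorph f).symm w)
      simpa [hF.toOpenPartialHomeomorph_coe] using this.hasDerivAt
    exact (((hF.toOpenPartialHomeomorph f).hasDerivAt_symm hw.1 hw2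
      hda).differentiableAt).differentiableWithinAt
  exact hdiff.analyticAt (hU.mem_nhds hmem)

/-- Isotropy germs at a pre-periodic, non-pre-critical point: if `x` is pre-periodic
for the non-constant holomorphic map `H` with minimal pre-period `n` and period `p`,
and no point of the forward orbit of `x` is critical, then any conformal germ `η` at `x`
fixing `x` with `H^m ∘ η = H^{kp+m}` near `x` (some `m ≥ n`) is uniquely determined as a
germ by `k`; namely `η = (H^n)⁻¹ ∘ H^{kp+n}` for the local inverse `g` of `H^n` at `x`. -/
theorem isotropy_germ_unique_of_not_precritical
    (H : ℂ → ℂ) (hH : Differentiable ℂ H) (hnc : ∀ c : ℂ, H ≠ fun _ => c)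
    (x : ℂ) (n p : ℕ) (hp : 1 ≤ p)
    (hper : H^[n + p] x = H^[n] x)
    (hpmin : ∀ q : ℕ, 1 ≤ q → q < p → H^[n + q] x ≠ H^[n] x)
    (hnmin : ∀ m : ℕ, m < n → H^[m + p] x ≠ H^[m] x)
    (hnoncrit : ∀ k : ℕ, deriv H (H^[k] x) ≠ 0)
    (k : ℤ) (hk : 0 ≤ k * (p : ℤ) + (n : ℤ)) :
    ∃ g : ℂ → ℂ, AnalyticAt ℂ g (H^[n] x) ∧ (∀ᶠ z in 𝓝 x, g (H^[n] z) = z) ∧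
      ∀ (η : ℂ → ℂ) (m : ℕ), n ≤ m → 0 ≤ k * (p : ℤ) + (m : ℤ) →
        AnalyticAt ℂ η x → η x = x → deriv η x ≠ 0 →
        (∀ᶠ z in 𝓝 x, H^[m] (η z) = H^[(k * (p : ℤ) + (m : ℤ)).toNat] z) →
        η =ᶠ[𝓝 x] fun z => g (H^[(k * (p : ℤ) + (n : ℤ)).toNat] z) := by
  clear hnc hpmin
  have hHa : ∀ a : ℕ, Differentiable ℂ (H^[a]) := fun a => hH.iterate a
  -- nonvanishing derivatives of iterates at x
  have hder : ∀ a : ℕ, deriv (H^[a]) x ≠ 0 := by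
    intro a
    induction a with
    | zero => simp
    | succ a ih =>
      rw [Function.iterate_succ' H a,
        deriv_comp x hH.differentiableAt ((hHa a).differentiableAt)]
      exact mul_ne_zero (hnoncrit a) ih
  -- periodicity facts
  have hper1 : ∀ i, n ≤ i → H^[i + p] x = H^[i] x := by
    intro i hi
    obtain ⟨r, rfl⟩ := Nat.exists_eq_add_of_le hi
    have h1 : n + r + p = r + (n + p) := by ring
    have h2 : n + r = r + n := by ring
    rw [h1, Function.iterate_add_apply H r (n + p) x, hper, h2,
      Function.iterate_add_apply H r n x]
  have hperc : ∀ i, n ≤ i → ∀ c : ℕ, H^[i + c * p] x = H^[i] x := by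
    intro i hi c
    induction c with
    | zero => simp
    | succ c ih =>
      have h1 : i + (c + 1) * p = (i + c * p) + p := by ring
      rw [h1, hper1 _ (le_trans hi (Nat.le_add_right _ _)), ih]
  set t := (k * (p : ℤ) + (n : ℤ)).toNat with htdef
  have ht : (t : ℤ) = k * (p : ℤ) + (n : ℤ) := Int.toNat_of_nonneg hk
  set j := n - t with hjdef
  -- key periodicity : H^[j+t] x = H^[n+j] x
  have hjt : H^[j + t] x = H^[n + j] x := by
    rcases le_or_gt 0 k with hk0 | hk0
    · -- k ≥ 0 : t = n + k.toNat * p, j = 0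
      have hc : ((k.toNat : ℤ)) = k := Int.toNat_of_nonneg hk0
      have htn2 : t = n + k.toNat * p := by
        have hcast : (t : ℤ) = ((n + k.toNat * p : ℕ) : ℤ) := by
          push_cast
          rw [hc]; linarith [ht]
        exact_mod_cast hcast
      have hj0 : j = 0 := by omega
      rw [hj0]
      simp only [Nat.zero_add, Nat.add_zero]
      rw [htn2]
      exact hperc n le_rfl k.toNat
    · -- k < 0 : t + c * p = n with c = (-k).toNat
      have hc : (((-k).toNat : ℤ)) = -k := Int.toNat_of_nonneg (by omega)
      have htc : t + (-k).toNat * p = n := by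
        have hcast : ((t + (-k).toNat * p : ℕ) : ℤ) = (n : ℤ) := by
          push_cast
          rw [hc]; linarith [ht]
        exact_mod_cast hcast
      have h1 : j + t = n := by omega
      have h2 : n + j = n + (-k).toNat * p := by omega
      rw [h1, h2]
      exact (hperc n le_rfl (-k).toNat).symm
  -- local inverse of H^[n+j] at x
  obtain ⟨G, hGa, hGc, hGfx, hGl, hGr⟩ :=
    exists_local_inverse (H^[n + j]) (hHa (n + j)) x (hder (n + j))
  have hjt' : H^[j] (H^[t] x) = H^[n + j] x := by
    rw [← Function.iterate_add_apply, hjt]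
  refine ⟨fun w => G (H^[j] w), ?_, ?_, ?_⟩
  · -- analyticity at H^[n] x
    have h1 : AnalyticAt ℂ G (H^[j] (H^[n] x)) := by
      rw [← Function.iterate_add_apply, Nat.add_comm j n]
      exact hGa
    exact h1.comp ((hHa j).analyticAt _)
  · -- left inverse on iterates
    filter_upwards [hGl] with z hz
    rw [← Function.iterate_add_apply, Nat.add_comm j n]
    exact hz
  · -- uniqueness of the germ
    intro η m hm hkm hηa hηx hηd hη
    clear hηd
    set s := (k * (p : ℤ) + (m : ℤ)).toNat with hsdef
    have hs : (s : ℤ) = k * (p : ℤ) + (m : ℤ) := Int.toNat_of_nonneg hkm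
    have hxm : H^[m] x = H^[s] x := by
      have := hη.self_of_nhds
      rwa [hηx] at this
    -- s ≥ n
    have hsn : n ≤ s := by
      by_contra hlt
      push_neg at hlt
      have hms : s < m := lt_of_lt_of_le hlt hm
      set d := m - s with hddef
      have hsd : H^[s + d] x = H^[s] x := by
        rw [show s + d = m by omega]; exact hxm
      have hrep : ∀ c : ℕ, H^[s + c * d] x = H^[s] x := by
        intro c
        induction c with
        | zero => simp
        | succ c ih =>
          have h1 : s + (c + 1) * d = (s + c * d) + d := by ring
          have h2 : (s + c * d) + d = d + (s + c * d) := by ring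
          have h3 : s + d = d + s := by ring
          rw [h1, h2, Function.iterate_add_apply, ih, ← Function.iterate_add_apply,
            ← h3, hsd]
      have hin : n ≤ s + n * d := by
        have hd1 : 1 ≤ d := by omega
        calc n = n * 1 := by ring
        _ ≤ n * d := Nat.mul_le_mul_left n hd1
        _ ≤ s + n * d := Nat.le_add_left _ _
      have hcontr : H^[s + p] x = H^[s] x := by
        have h1 : H^[s + n * d] x = H^[s] x := hrep n
        have h2 : H^[(s + n * d) + p] x = H^[s + n * d] x := hper1 _ hin
        calc H^[s + p] x = H^[p] (H^[s] x) := by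
              rw [add_comm s p]; exact Function.iterate_add_apply H p s x
        _ = H^[p] (H^[s + n * d] x) := by rw [h1]
        _ = H^[(s + n * d) + p] x := by
              rw [add_comm (s + n * d) p]
              exact (Function.iterate_add_apply H p (s + n * d) x).symm
        _ = H^[s] x := by rw [h2, h1]
      exact hnmin s hlt hcontr
    -- local inverse of the big iterate
    obtain ⟨GM, hGMa, hGMc, hGMfx, hGMl, hGMr⟩ :=
      exists_local_inverse (H^[(n + j) + m]) (hHa ((n + j) + m)) x (hder ((n + j) + m))
    clear hGMa hGMc hGMfx hGMr
    -- exponent bookkeeping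
    have hst : s + n = t + m := by
      have hcast : (s : ℤ) + (n : ℤ) = (t : ℤ) + (m : ℤ) := by linarith [hs, ht]
      exact_mod_cast hcast
    have hexp : (n + j) + s = m + (j + t) := by omega
    -- (i) : H^[(n+j)+m] ∘ η = H^[(n+j)+s] near x
    have hA : ∀ᶠ z in 𝓝 x, H^[(n + j) + m] (η z) = H^[(n + j) + s] z := by
      filter_upwards [hη] with z hz
      calc H^[(n + j) + m] (η z) = H^[n + j] (H^[m] (η z)) :=
            Function.iterate_add_apply H (n + j) m (η z)
      _ = H^[n + j] (H^[s] z) := by rw [hz]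
      _ = H^[(n + j) + s] z := (Function.iterate_add_apply H (n + j) s z).symm
    -- tendsto facts
    have hjtT : Tendsto (fun z => H^[j] (H^[t] z)) (𝓝 x) (𝓝 (H^[n + j] x)) := by
      have h1 : ContinuousAt (fun z => H^[j] (H^[t] z)) x :=
        ((hHa j).continuous.comp (hHa t).continuous).continuousAt
      have h2 := h1.tendsto
      rwa [hjt'] at h2
    -- (ii) : H^[(n+j)+m] ∘ (g ∘ H^[t]) = H^[m+(j+t)] near x
    have hB : ∀ᶠ z in 𝓝 x, H^[(n + j) + m] (G (H^[j] (H^[t] z))) = H^[m + (j + t)] z := by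
      filter_upwards [hjtT.eventually hGr] with z hz
      calc H^[(n + j) + m] (G (H^[j] (H^[t] z)))
          = H^[m + (n + j)] (G (H^[j] (H^[t] z))) := by rw [Nat.add_comm (n + j) m]
      _ = H^[m] (H^[n + j] (G (H^[j] (H^[t] z)))) :=
            Function.iterate_add_apply H m (n + j) _
      _ = H^[m] (H^[j] (H^[t] z)) := by rw [hz]
      _ = H^[m] (H^[j + t] z) := by rw [Function.iterate_add_apply]
      _ = H^[m + (j + t)] z := (Function.iterate_add_apply H m (j + t) z).symm
    -- combine
    have hAB : ∀ᶠ z in 𝓝 x,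
        H^[(n + j) + m] (η z) = H^[(n + j) + m] (G (H^[j] (H^[t] z))) := by
      filter_upwards [hA, hB] with z h1 h2
      rw [h1, h2, hexp]
    -- cancel the big iterate using its local left inverse
    have hηT : Tendsto η (𝓝 x) (𝓝 x) := by
      have := hηa.continuousAt.tendsto
      rwa [hηx] at this
    have hφx : G (H^[j] (H^[t] x)) = x := by rw [hjt']; exact hGfx
    have hφT : Tendsto (fun z => G (H^[j] (H^[t] z))) (𝓝 x) (𝓝 x) := by
      have h2 : Tendsto G (𝓝 (H^[n + j] x)) (𝓝 x) := by
        have := hGc.tendsto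
        rwa [hGfx] at this
      exact h2.comp hjtT
    filter_upwards [hAB, hηT.eventually hGMl, hφT.eventually hGMl] with z h1 h2 h3
    calc η z = GM (H^[(n + j) + m] (η z)) := h2.symm
    _ = GM (H^[(n + j) + m] (G (H^[j] (H^[t] z)))) := by rw [h1]
    _ = G (H^[j] (H^[t] z)) := h3
end

section
/- Let H : S → S be a non-constant holomorphic map on a connected Riemann surface, x ∈ S a point which is pre-periodic to a non-critical periodic orbit with least pre-period n and period p, and suppose val(H, H^j(x)) = 1 for all j ≥ n while d = val(H^n, x) ≥ 2. Then the set of germs at x of holomorphic injective maps η fixing x with H^n ∘ η = H^n near x forms, under composition, a cyclic group of order d. -/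
open Topology Filter Function


lemma exists_analytic_local_inverse_s18 {φ : ℂ → ℂ} {x : ℂ} (hφ : AnalyticAt ℂ φ x)
    (hd : deriv φ x ≠ 0) :
    ∃ ψ : ℂ → ℂ, AnalyticAt ℂ ψ (φ x) ∧ ψ (φ x) = x ∧
      (∀ᶠ z in 𝓝 x, ψ (φ z) = z) ∧ (∀ᶠ w in 𝓝 (φ x), φ (ψ w) = w) := by
  have hsd : HasStrictDerivAt φ (deriv φ x) x := by
    have := hφ.hasStrictFDerivAt
    simpa [hasStrictDerivAt_iff_hasStrictFDerivAt] using this.hasStrictDerivAt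
  have F := hsd.hasStrictFDerivAt_equiv hd
  set ψ := F.localInverse φ _ x with hψdef
  have hleft : ∀ᶠ z in 𝓝 x, ψ (φ z) = z := F.eventually_left_inverse
  have hright : ∀ᶠ w in 𝓝 (φ x), φ (ψ w) = w := F.eventually_right_inverse
  have hψx : ψ (φ x) = x := hleft.self_of_nhds
  -- analyticity of ψ at φ x
  have hcont : ContinuousAt ψ (φ x) := F.localInverse_continuousAt
  have htψ : Tendsto ψ (𝓝 (φ x)) (𝓝 x) := by
    simpa [hψx] using hcont.tendsto
  have hφnhds : ∀ᶠ w in 𝓝 x, AnalyticAt ℂ φ w := hφ.eventually_analyticAt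
  have hderivnz : ∀ᶠ w in 𝓝 x, deriv φ w ≠ 0 := by
    obtain ⟨s, hso, hxs, hs⟩ : ∃ s, IsOpen s ∧ x ∈ s ∧ ∀ w ∈ s, AnalyticAt ℂ φ w := by
      rcases eventually_nhds_iff.1 hφnhds with ⟨s, hs, hso, hxs⟩
      exact ⟨s, hso, hxs, hs⟩
    have hda : AnalyticOnNhd ℂ (deriv φ) s := AnalyticOnNhd.deriv (fun w hw => hs w hw)
    have : ContinuousAt (deriv φ) x := (hda x hxs).continuousAt
    exact this.eventually_ne hd
  have hev : ∀ᶠ w in 𝓝 (φ x), DifferentiableAt ℂ ψ w := by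
    have h1 : ∀ᶠ w in 𝓝 (φ x), AnalyticAt ℂ φ (ψ w) ∧ deriv φ (ψ w) ≠ 0 :=
      htψ.eventually (hφnhds.and hderivnz)
    have h2 : ∀ᶠ w in 𝓝 (φ x), ∀ᶠ v in 𝓝 w, φ (ψ v) = v :=
      hright.eventually_nhds
    have h3 : ∀ᶠ w in 𝓝 (φ x), ContinuousAt ψ w := by
      have : ∀ᶠ w in 𝓝 (φ x),
          w ∈ (F.toOpenPartialHomeomorph φ).target := by
        apply (F.toOpenPartialHomeomorph φ).open_target.eventually_mem
        exact F.image_mem_toOpenPartialHomeomorph_target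
      filter_upwards [this] with w hw
      exact (F.toOpenPartialHomeomorph φ).continuousAt_symm hw
    filter_upwards [h1, h2, h3] with w hw1 hw2 hw3
    exact (HasDerivAt.of_local_left_inverse hw3
      (hw1.1.differentiableAt.hasDerivAt) hw1.2 hw2).differentiableAt
  exact ⟨ψ, Complex.analyticAt_iff_eventually_differentiableAt.2 hev, hψx, hleft, hright⟩

lemma exists_analytic_root_s18 {g : ℂ → ℂ} {x : ℂ} (hg : AnalyticAt ℂ g x) (hg0 : g x ≠ 0)
    {d : ℕ} (hd : d ≠ 0) :
    ∃ h : ℂ → ℂ, AnalyticAt ℂ h x ∧ h x ≠ 0 ∧ ∀ᶠ z in 𝓝 x, (h z) ^ d = g z := by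
  have hdc : (d : ℂ) ≠ 0 := Nat.cast_ne_zero.2 hd
  set c : ℂ := Complex.exp (Complex.log (g x) / d) with hc
  have hcd : c ^ d = g x := by
    rw [hc, ← Complex.exp_nat_mul, mul_div_cancel₀ _ hdc, Complex.exp_log hg0]
  set h : ℂ → ℂ := fun z => c * Complex.exp (Complex.log (g z / g x) / d) with hh
  have hq : AnalyticAt ℂ (fun z => g z / g x) x := hg.div analyticAt_const hg0
  have hqan : AnalyticAt ℂ h x := by
    apply analyticAt_const.mul
    apply AnalyticAt.cexp
    apply AnalyticAt.div _ analyticAt_const hdc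
    exact hq.clog (by simp [div_self hg0, Complex.one_mem_slitPlane])
  refine ⟨h, hqan, ?_, ?_⟩
  · simp [hh, div_self hg0, Complex.exp_ne_zero, c, Complex.exp_ne_zero]
  · have hev : ∀ᶠ z in 𝓝 x, g z ≠ 0 := hg.continuousAt.eventually_ne hg0
    filter_upwards [hev] with z hz
    have : Complex.exp (Complex.log (g z / g x) / d) ^ d = g z / g x := by
      rw [← Complex.exp_nat_mul, mul_div_cancel₀ _ hdc,
        Complex.exp_log (div_ne_zero hz hg0)]
    rw [hh]
    simp only [mul_pow, this, hcd]
    field_simp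

/-- Let `x` be pre-periodic to a non-critical periodic orbit with least pre-period `n`
and period `p`, with `val(H, H^j(x)) = 1` for all `j ≥ n` and `d = val(H^n, x) ≥ 2`.
Then the germs at `x` of conformal maps `η` fixing `x` with `H^n ∘ η = H^n` near `x`
form a cyclic group of order `d` under composition: there is a generator `σ` of germ
order exactly `d` whose iterates exhaust all such germs. -/
theorem symmetry_germs_cyclic_of_order_valency
    (H : ℂ → ℂ) (hH : Differentiable ℂ H)
    (x : ℂ) (n p : ℕ) (hp : 1 ≤ p)
    (hper : H^[p] (H^[n] x) = H^[n] x)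
    (hpmin : ∀ q : ℕ, 1 ≤ q → q < p → H^[q] (H^[n] x) ≠ H^[n] x)
    (hnmin : ∀ m : ℕ, m < n → H^[p] (H^[m] x) ≠ H^[m] x)
    (hnoncrit : ∀ j : ℕ, n ≤ j → deriv H (H^[j] x) ≠ 0)
    (d : ℕ) (hd : 2 ≤ d) (hval : HasValency (H^[n]) x d) :
    ∃ σ : ℂ → ℂ, AnalyticAt ℂ σ x ∧ σ x = x ∧ deriv σ x ≠ 0 ∧
      (∀ᶠ z in 𝓝 x, H^[n] (σ z) = H^[n] z) ∧
      (∀ᶠ z in 𝓝 x, σ^[d] z = z) ∧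
      (∀ i : ℕ, 0 < i → i < d → ¬ (∀ᶠ z in 𝓝 x, σ^[i] z = z)) ∧
      (∀ η : ℂ → ℂ, AnalyticAt ℂ η x → η x = x → deriv η x ≠ 0 →
        (∀ᶠ z in 𝓝 x, H^[n] (η z) = H^[n] z) →
        ∃ i : ℕ, i < d ∧ ∀ᶠ z in 𝓝 x, η z = σ^[i] z) := by
  clear hH hp hper hpmin hnmin hnoncrit
  obtain ⟨g, hg, hg0, hgeq⟩ := hval
  have hd0 : d ≠ 0 := by omega
  have hdc : (d : ℂ) ≠ 0 := Nat.cast_ne_zero.2 hd0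
  obtain ⟨h, hhan, hh0, hhd⟩ := exists_analytic_root_s18 hg hg0 hd0
  set φ : ℂ → ℂ := fun z => (z - x) * h z with hφdef
  have hφ : AnalyticAt ℂ φ x := (analyticAt_id.sub analyticAt_const).mul hhan
  have hφx : φ x = 0 := by simp [hφdef]
  have hφd : HasDerivAt φ (h x) x := by
    have h1 : HasDerivAt (fun z => z - x) 1 x := (hasDerivAt_id x).sub_const x
    have h2 : HasDerivAt h (deriv h x) x := hhan.differentiableAt.hasDerivAt
    have := h1.mul h2
    simp at this; exact this
  have hφd0 : deriv φ x ≠ 0 := by rw [hφd.deriv]; exact hh0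
  have hkey : ∀ᶠ z in 𝓝 x, (H^[n]) z - (H^[n]) x = φ z ^ d := by
    filter_upwards [hgeq, hhd] with z h1 h2
    rw [h1, ← h2, ← mul_pow]
  obtain ⟨ψ, hψan, hψx, hleft, hright⟩ := exists_analytic_local_inverse_s18 hφ hφd0
  rw [hφx] at hψan hψx hright
  have hψcont : Tendsto ψ (𝓝 0) (𝓝 x) := by
    have := hψan.continuousAt.tendsto
    rwa [hψx] at this
  set ζ : ℂ := Complex.exp (2 * Real.pi * Complex.I / d) with hζdef
  have hζprim : IsPrimitiveRoot ζ d := Complex.isPrimitiveRoot_exp d hd0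
  have hζd : ζ ^ d = 1 := hζprim.pow_eq_one
  have habs : ‖ζ‖ = 1 := by
    have h1 : ‖ζ‖ ^ d = 1 := by rw [← norm_pow, hζd, norm_one]
    rcases lt_trichotomy (‖ζ‖) 1 with hlt | heq | hgt
    · exact absurd h1 (by nlinarith [pow_lt_one₀ (norm_nonneg ζ) hlt hd0])
    · exact heq
    · exact absurd h1 (by nlinarith [one_lt_pow₀ hgt hd0])
  set σ : ℂ → ℂ := fun z => ψ (ζ * φ z) with hσdef
  -- neighborhoods setup
  obtain ⟨W, hWp, hWo, hxW⟩ := eventually_nhds_iff.1 hleft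
  have hψWmem : ∀ᶠ w in 𝓝 (0 : ℂ), ψ w ∈ W := hψcont.eventually (hWo.eventually_mem hxW)
  obtain ⟨s, hs0, hball⟩ := Metric.mem_nhds_iff.1 (hright.and hψWmem)
  have hballmem : ∀ w : ℂ, ‖w‖ < s → φ (ψ w) = w ∧ ψ w ∈ W := by
    intro w hw
    exact hball (by simpa [Metric.mem_ball, Complex.dist_eq] using hw)
  have hVmem : ∀ᶠ z in 𝓝 x, z ∈ W ∧ ‖φ z‖ < s := by
    have h1 : ∀ᶠ z in 𝓝 x, z ∈ W := hWo.eventually_mem hxW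
    have h2 : Tendsto (fun z => ‖φ z‖) (𝓝 x) (𝓝 0) := by
      have h3 := continuous_norm.continuousAt.comp hφ.continuousAt
      simpa [ContinuousAt, Function.comp_def, hφx] using h3
    exact h1.and (h2.eventually_lt_const hs0)
  have step : ∀ w, w ∈ W → ‖φ w‖ < s → σ w ∈ W ∧ φ (σ w) = ζ * φ w := by
    intro w hwW hws
    have hb := hballmem (ζ * φ w) (by rw [norm_mul, habs, one_mul]; exact hws)
    exact ⟨hb.2, hb.1⟩
  have iter : ∀ i : ℕ, ∀ z, z ∈ W → ‖φ z‖ < s →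
      ((σ^[i] z ∈ W ∧ ‖φ (σ^[i] z)‖ < s) ∧ φ (σ^[i] z) = ζ ^ i * φ z) := by
    intro i
    induction i with
    | zero =>
      intro z hzW hzs
      refine ⟨⟨by simpa using hzW, by simpa using hzs⟩, by simp⟩
    | succ i ih =>
      intro z hzW hzs
      obtain ⟨⟨hW', hs'⟩, hφ'⟩ := ih z hzW hzs
      obtain ⟨h1, h2⟩ := step _ hW' hs'
      rw [Function.iterate_succ_apply']
      refine ⟨⟨h1, ?_⟩, ?_⟩
      · rw [h2, norm_mul, habs, one_mul]; exact hs'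
      · rw [h2, hφ']; ring
  -- basic facts about σ
  have hσan : AnalyticAt ℂ σ x := by
    have h1 : AnalyticAt ℂ (fun z => ζ * φ z) x := analyticAt_const.mul hφ
    have h2 : AnalyticAt ℂ ψ (ζ * φ x) := by rw [hφx, mul_zero]; exact hψan
    have h3 := AnalyticAt.comp (f := fun z => ζ * φ z) h2 h1
    simpa [Function.comp_def] using h3
  have hσx : σ x = x := by
    have : σ x = ψ (ζ * φ x) := rfl
    rw [this, hφx, mul_zero, hψx]
  have hψd : HasDerivAt ψ (deriv ψ 0) 0 := hψan.differentiableAt.hasDerivAt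
  have hone : deriv ψ 0 * h x = 1 := by
    have hψdφ : HasDerivAt ψ (deriv ψ 0) (φ x) := by rw [hφx]; exact hψd
    have hcomp : HasDerivAt (fun z => ψ (φ z)) (deriv ψ 0 * h x) x := by
      have := HasDerivAt.comp x hψdφ hφd
      simpa [Function.comp_def] using this
    have hid : HasDerivAt (fun z => ψ (φ z)) 1 x :=
      (hasDerivAt_id x).congr_of_eventuallyEq hleft
    exact hcomp.unique hid
  have hζ0 : ζ ≠ 0 := Complex.exp_ne_zero _
  have hσderiv : deriv σ x = ζ := by
    have h2 : HasDerivAt (fun z => ζ * φ z) (ζ * h x) x := hφd.const_mul ζ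
    have h3 : HasDerivAt ψ (deriv ψ 0) (ζ * φ x) := by
      rw [hφx, mul_zero]; exact hψd
    have h4 : HasDerivAt σ (deriv ψ 0 * (ζ * h x)) x := by
      have := HasDerivAt.comp x h3 h2
      simpa [Function.comp_def] using this
    rw [h4.deriv]
    calc deriv ψ 0 * (ζ * h x) = ζ * (deriv ψ 0 * h x) := by ring
    _ = ζ := by rw [hone, mul_one]
  have hσcont : Tendsto σ (𝓝 x) (𝓝 x) := by
    have := hσan.continuousAt.tendsto
    rwa [hσx] at this
  refine ⟨σ, hσan, hσx, by rw [hσderiv]; exact hζ0, ?_, ?_, ?_, ?_⟩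
  · -- H^n invariance
    filter_upwards [hσcont.eventually hkey, hkey, hVmem] with z h1z hkz hV
    have hstep := step z hV.1 hV.2
    have he : φ (σ z) ^ d = φ z ^ d := by rw [hstep.2, mul_pow, hζd, one_mul]
    have := h1z.trans (he.trans hkz.symm)
    exact sub_left_inj.1 this
  · -- σ^[d] = id
    filter_upwards [hVmem] with z hV
    obtain ⟨⟨hW', _⟩, hφ'⟩ := iter d z hV.1 hV.2
    have e1 : ψ (φ (σ^[d] z)) = σ^[d] z := hWp _ hW'
    have e2 : ψ (φ z) = z := hWp _ hV.1
    rw [hφ', hζd, one_mul, e2] at e1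
    exact e1.symm
  · -- no smaller period
    intro i hi0 hid hcon
    have hζi : ζ ^ i ≠ 1 := hζprim.pow_ne_one_of_pos_of_lt hi0.ne' hid
    have hne : ∀ᶠ z in 𝓝 x, h z ≠ 0 := hhan.continuousAt.eventually_ne hh0
    have : ∀ᶠ z in 𝓝[≠] x, False := by
      filter_upwards [((hcon.and hVmem).and hne).filter_mono nhdsWithin_le_nhds,
        self_mem_nhdsWithin] with z hz hzx
      obtain ⟨⟨hiz, hV⟩, hnz⟩ := hz
      obtain ⟨_, hφ'⟩ := iter i z hV.1 hV.2
      rw [hiz] at hφ'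
      have hφnz : φ z ≠ 0 := mul_ne_zero (sub_ne_zero.2 hzx) hnz
      have h1 : (1 : ℂ) * φ z = ζ ^ i * φ z := by rw [one_mul]; exact hφ'
      exact hζi (mul_right_cancel₀ hφnz h1).symm
    obtain ⟨z, hz⟩ := this.exists
    exact hz
  · -- exhaustion
    intro η hηan hηx hηd hηinv
    set k : ℂ → ℂ := dslope η x with hk
    have hkan : AnalyticAt ℂ k x := by
      obtain ⟨pη, hpη⟩ := hηan
      exact hpη.has_fpower_series_dslope_fslope.analyticAt
    have hfact : ∀ z, η z - x = (z - x) * k z := by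
      intro z
      have := sub_smul_dslope η x z
      rw [smul_eq_mul, hηx] at this
      exact this.symm
    have hηcont : Tendsto η (𝓝 x) (𝓝 x) := by
      have := hηan.continuousAt.tendsto
      rwa [hηx] at this
    have hA : ∀ᶠ z in 𝓝 x, φ (η z) ^ d = φ z ^ d := by
      filter_upwards [hηcont.eventually hkey, hkey, hηinv] with z h1 h2 h3
      rw [← h1, ← h2, h3]
    set Fz : ℂ → ℂ := fun z => k z * h (η z) with hF
    have hFan : AnalyticAt ℂ Fz x := by
      apply hkan.mul
      have h2 : AnalyticAt ℂ h (η x) := by rwa [hηx]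
      exact h2.comp hηan
    have hphiη : ∀ z, φ (η z) = (z - x) * Fz z := by
      intro z
      have : φ (η z) = (η z - x) * h (η z) := rfl
      rw [this, hfact z]; ring
    have hqzero : ∀ᶠ z in 𝓝 x, Fz z ^ d = h z ^ d := by
      have hpunct : ∀ᶠ z in 𝓝 x, z ≠ x → Fz z ^ d = h z ^ d := by
        filter_upwards [hA] with z hz hzx
        have e : (z - x) ^ d * Fz z ^ d = (z - x) ^ d * h z ^ d := by
          rw [← mul_pow, ← mul_pow, ← hphiη z]; exact hz
        exact mul_left_cancel₀ (pow_ne_zero _ (sub_ne_zero.2 hzx)) e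
      have hcF : ContinuousAt (fun z => Fz z ^ d - h z ^ d) x :=
        (hFan.continuousAt.pow d).sub (hhan.continuousAt.pow d)
      have hx0 : Fz x ^ d - h x ^ d = 0 := by
        have h1 : Tendsto (fun z => Fz z ^ d - h z ^ d) (𝓝[≠] x)
            (𝓝 (Fz x ^ d - h x ^ d)) := hcF.tendsto.mono_left nhdsWithin_le_nhds
        have h2 : Tendsto (fun z => Fz z ^ d - h z ^ d) (𝓝[≠] x) (𝓝 0) := by
          apply Tendsto.congr' _ tendsto_const_nhds
          filter_upwards [hpunct.filter_mono nhdsWithin_le_nhds, self_mem_nhdsWithin]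
            with z hz hzx
          rw [hz hzx, sub_self]
        exact tendsto_nhds_unique h1 h2
      filter_upwards [hpunct] with z hz
      by_cases hzx : z = x
      · subst hzx; linear_combination hx0
      · exact hz hzx
    have hFx : Fz x ≠ 0 := by
      intro hF0
      have h0 := hqzero.self_of_nhds
      rw [hF0, zero_pow hd0] at h0
      exact hh0 (pow_eq_zero_iff hd0 |>.1 h0.symm)
    have hroot : (Fz x / h x) ^ d = 1 := by
      rw [div_pow, hqzero.self_of_nhds, div_self (pow_ne_zero _ hh0)]
    haveI : NeZero d := ⟨hd0⟩
    obtain ⟨i, hid, hζi⟩ := hζprim.eq_pow_of_pow_eq_one hroot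
    refine ⟨i, hid, ?_⟩
    have hTfin : ({w : ℂ | w ^ d = 1}).Finite := by
      apply Set.Finite.subset (Set.finite_range (fun j : Fin d => ζ ^ (j : ℕ)))
      intro w hw
      obtain ⟨j, hj, hjw⟩ := hζprim.eq_pow_of_pow_eq_one hw
      exact ⟨⟨j, hj⟩, hjw⟩
    have hratio : ∀ᶠ z in 𝓝 x, Fz z = ζ ^ i * h z := by
      have hGnz : ∀ᶠ z in 𝓝 x, h z ≠ 0 := hhan.continuousAt.eventually_ne hh0
      have hmemT : ∀ᶠ z in 𝓝 x, (Fz z / h z) ∈ {w : ℂ | w ^ d = 1} := by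
        filter_upwards [hqzero, hGnz] with z h1 h2
        simp only [Set.mem_setOf_eq, div_pow, h1, div_self (pow_ne_zero d h2)]
      have hcratio : ContinuousAt (fun z => Fz z / h z) x :=
        hFan.continuousAt.div hhan.continuousAt hh0
      have hcl : IsClosed ({w : ℂ | w ^ d = 1} \ {ζ ^ i}) :=
        (hTfin.subset Set.diff_subset).isClosed
      have hnotin : Fz x / h x ∉ ({w : ℂ | w ^ d = 1} \ {ζ ^ i}) := by
        intro hc
        exact hc.2 (by rw [Set.mem_singleton_iff, ← hζi])
      have hev2 : ∀ᶠ z in 𝓝 x, Fz z / h z ∈ ({w : ℂ | w ^ d = 1} \ {ζ ^ i})ᶜ :=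
        hcratio.preimage_mem_nhds (hcl.isOpen_compl.mem_nhds hnotin)
      filter_upwards [hmemT, hev2, hGnz] with z h1 h2 h3
      have he : Fz z / h z = ζ ^ i := by
        by_contra hne
        exact h2 ⟨h1, hne⟩
      rw [div_eq_iff h3] at he
      exact he
    have hφηev : ∀ᶠ z in 𝓝 x, φ (η z) = ζ ^ i * φ z := by
      filter_upwards [hratio] with z hz
      rw [hphiη z, hz]
      have : φ z = (z - x) * h z := rfl
      rw [this]; ring
    have hηW : ∀ᶠ z in 𝓝 x, η z ∈ W := hηcont.eventually (hWo.eventually_mem hxW)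
    filter_upwards [hφηev, hηW, hVmem] with z h1 h2 hV
    obtain ⟨⟨hW', _⟩, hφ'⟩ := iter i z hV.1 hV.2
    have e1 : ψ (φ (σ^[i] z)) = σ^[i] z := hWp _ hW'
    have e2 : ψ (φ (η z)) = η z := hWp _ h2
    rw [hφ'] at e1
    rw [h1] at e2
    rw [← e2, ← e1]
end
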